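/- arXiv:0706.0908 — 9 statements merged into one kernel-verified Lean document; each statement's English description precedes it below -/
import Mathlib

section
/- Let $\hat{\nu}$ be a holonomic probability on $[0,1]\times\Sigma$, let $\pi(x,w)=x$ and $\nu=\pi_*\hat{\nu}$. Suppose $(\hat{\nu}_y)_{y\in[0,1]}$ is a family of Borel probability measures on $[0,1]\times\Sigma$ such that $y\mapsto\hat{\nu}_y(A)$ is Borel measurable for every Borel set $A$, $\hat{\nu}_y\big(([0,1]\setminus\{y\})\times\Sigma\big)=0$ for $\nu$-a.e. $y$, and $\int g\,d\hat{\nu}=\int_{[0,1]}\int g\,d\hat{\nu}_y\,d\nu(y)$ for every bounded Borel $g:[0,1]\times\Sigma\to\mathbb{R}$. Define $u_i(y)=\hat{\nu}_y(\{y\}\times[i])$ for $i=0,\dots,d-1$, where $[i]=\{w\in\Sigma: w_1=i\}$. Then $\sum_{i=0}^{d-1}u_i(y)=1$ for $\nu$-a.e. $y$, and $\nu$ is $P_u$-invariant: $\int \sum_{i=0}^{d-1}u_i(y)f(\tau_i(y))\,d\nu(y)=\int f\,d\nu$ for every continuous $f:[0,1]\to\mathbb{R}$. -/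
open MeasureTheory

noncomputable section

/-- A probability on `[0,1] × Σ` is holonomic. -/
def IsHolonomic {d : ℕ} (τ : Fin d → unitInterval → unitInterval)
    (ν : Measure (unitInterval × (ℕ → Fin d))) : Prop :=
  ∀ f : C(unitInterval, ℝ), (∫ p, f (τ (p.2 0) p.1) ∂ν) = ∫ p, f p.1 ∂ν

theorem stmt1 {d : ℕ} (hd : 1 ≤ d) (τ : Fin d → unitInterval → unitInterval)
    (hτ : ∀ i, Continuous (τ i))
    (nuhat : Measure (unitInterval × (ℕ → Fin d))) [IsProbabilityMeasure nuhat]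
    (hhol : IsHolonomic τ nuhat)
    (ν : Measure unitInterval) (hν : ν = Measure.map Prod.fst nuhat)
    (m : unitInterval → Measure (unitInterval × (ℕ → Fin d)))
    (hprob : ∀ y, IsProbabilityMeasure (m y))
    (hmeas : ∀ A : Set (unitInterval × (ℕ → Fin d)), MeasurableSet A →
      Measurable fun y => m y A)
    (hsupp : ∀ᵐ y ∂ν,
      m y ((({y} : Set unitInterval)ᶜ) ×ˢ (Set.univ : Set (ℕ → Fin d))) = 0)
    (hdisint : ∀ g : unitInterval × (ℕ → Fin d) → ℝ, Measurable g →
      (∃ C : ℝ, ∀ p, |g p| ≤ C) →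
      ∫ p, g p ∂nuhat = ∫ y, (∫ p, g p ∂(m y)) ∂ν) :
    (∀ᵐ y ∂ν, ∑ i : Fin d,
        (m y (({y} : Set unitInterval) ×ˢ {w : ℕ → Fin d | w 0 = i})).toReal = 1) ∧
    ∀ f : C(unitInterval, ℝ),
      (∫ y, ∑ i : Fin d,
        (m y (({y} : Set unitInterval) ×ˢ {w : ℕ → Fin d | w 0 = i})).toReal
          * f (τ i y) ∂ν)
      = ∫ y, f y ∂ν := by
  have hwmeas : ∀ i : Fin d, MeasurableSet {w : ℕ → Fin d | w 0 = i} := by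
    intro i
    have h : {w : ℕ → Fin d | w 0 = i} = (fun w : ℕ → Fin d => w 0) ⁻¹' {i} := rfl
    rw [h]
    exact measurable_pi_apply 0 (measurableSet_singleton i)
  have hSmeas : ∀ (y : unitInterval) (i : Fin d),
      MeasurableSet (({y} : Set unitInterval) ×ˢ {w : ℕ → Fin d | w 0 = i}) :=
    fun y i => (measurableSet_singleton y).prod (hwmeas i)
  -- full measure of {y} × univ
  have hfull : ∀ y : unitInterval,
      m y ((({y} : Set unitInterval)ᶜ) ×ˢ (Set.univ : Set (ℕ → Fin d))) = 0 →
      m y (({y} : Set unitInterval) ×ˢ (Set.univ : Set (ℕ → Fin d))) = 1 := by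
    intro y hy
    have := hprob y
    have hc : ((({y} : Set unitInterval)ᶜ) ×ˢ (Set.univ : Set (ℕ → Fin d)))ᶜ
        = ({y} : Set unitInterval) ×ˢ (Set.univ : Set (ℕ → Fin d)) := by
      ext ⟨x, w⟩
      simp only [Set.mem_compl_iff, Set.mem_prod, Set.mem_univ, and_true,
        Set.mem_singleton_iff, not_not]
    rw [← hc, measure_compl ((measurableSet_singleton y).compl.prod MeasurableSet.univ)
      (by simp [hy]), hy]
    simp
  have hsum1 : ∀ y : unitInterval,
      m y ((({y} : Set unitInterval)ᶜ) ×ˢ (Set.univ : Set (ℕ → Fin d))) = 0 →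
      ∑ i : Fin d,
        (m y (({y} : Set unitInterval) ×ˢ {w : ℕ → Fin d | w 0 = i})).toReal = 1 := by
    intro y hy
    have := hprob y
    have hU : (({y} : Set unitInterval) ×ˢ (Set.univ : Set (ℕ → Fin d)))
        = ⋃ i : Fin d, ({y} : Set unitInterval) ×ˢ {w : ℕ → Fin d | w 0 = i} := by
      ext ⟨x, w⟩
      simp only [Set.mem_prod, Set.mem_singleton_iff, Set.mem_univ, and_true,
        Set.mem_iUnion, Set.mem_setOf_eq]
      exact ⟨fun h => ⟨w 0, h, rfl⟩, fun ⟨i, h, _⟩ => h⟩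
    have hdisj : Pairwise (Function.onFun Disjoint
        fun i : Fin d => ({y} : Set unitInterval) ×ˢ {w : ℕ → Fin d | w 0 = i}) := by
      intro i j hij
      simp only [Function.onFun, Set.disjoint_left]
      rintro ⟨x, w⟩ ⟨-, h1⟩ ⟨-, h2⟩
      exact hij (h1.symm.trans h2)
    have hfy := hfull y hy
    rw [hU, measure_iUnion hdisj (fun i => hSmeas y i), tsum_fintype] at hfy
    have hne : ∀ i ∈ (Finset.univ : Finset (Fin d)),
        m y (({y} : Set unitInterval) ×ˢ {w : ℕ → Fin d | w 0 = i}) ≠ ⊤ :=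
      fun i _ => (measure_lt_top _ _).ne
    rw [← ENNReal.toReal_sum hne, hfy, ENNReal.toReal_one]
  constructor
  · filter_upwards [hsupp] with y hy using hsum1 y hy
  · intro f
    set C := ‖f‖ with hC
    have hfb : ∀ x, |f x| ≤ C := fun x => f.norm_coe_le_norm x
    set G : unitInterval × (ℕ → Fin d) → ℝ :=
      fun p => ∑ i : Fin d, ({q : unitInterval × (ℕ → Fin d) | q.2 0 = i}).indicator
        (fun q => f (τ i q.1)) p with hG
    have hGeq : ∀ p, G p = f (τ (p.2 0) p.1) := by
      intro p
      show (∑ i : Fin d, ({q : unitInterval × (ℕ → Fin d) | q.2 0 = i}).indicator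
        (fun q => f (τ i q.1)) p) = f (τ (p.2 0) p.1)
      rw [Finset.sum_eq_single (p.2 0)]
      · exact Set.indicator_of_mem
          (show p ∈ {q : unitInterval × (ℕ → Fin d) | q.2 0 = p.2 0} from rfl) _
      · intro i _ hi
        exact Set.indicator_of_notMem
          (show p ∉ {q : unitInterval × (ℕ → Fin d) | q.2 0 = i} from fun h => hi (Eq.symm h)) _
      · simp
    have hBmeas : ∀ i : Fin d,
        MeasurableSet {q : unitInterval × (ℕ → Fin d) | q.2 0 = i} := by
      intro i
      have h : {q : unitInterval × (ℕ → Fin d) | q.2 0 = i}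
          = Prod.snd ⁻¹' {w : ℕ → Fin d | w 0 = i} := rfl
      rw [h]
      exact measurable_snd (hwmeas i)
    have hGmeas : Measurable G := by
      rw [hG]
      apply Finset.measurable_sum
      intro i _
      exact Measurable.indicator
        ((f.continuous.comp (hτ i)).measurable.comp measurable_fst) (hBmeas i)
    have hGb : ∀ p, |G p| ≤ C := fun p => by rw [hGeq]; exact hfb _
    have h1 := hdisint G hGmeas ⟨C, hGb⟩
    have key : ∀ᵐ y ∂ν, (∫ p, G p ∂(m y))
        = ∑ i : Fin d,
            (m y (({y} : Set unitInterval) ×ˢ {w : ℕ → Fin d | w 0 = i})).toReal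
              * f (τ i y) := by
      filter_upwards [hsupp] with y hy
      have := hprob y
      have hInt : ∀ i : Fin d, Integrable
          (fun p : unitInterval × (ℕ → Fin d) =>
            ({q : unitInterval × (ℕ → Fin d) | q.2 0 = i}).indicator
              (fun q => f (τ i q.1)) p) (m y) := by
        intro i
        refine Integrable.indicator ?_ (hBmeas i)
        refine Integrable.mono' (integrable_const C)
          ((f.continuous.comp (hτ i)).measurable.comp measurable_fst).aestronglyMeasurable
          (ae_of_all _ fun p => ?_)
        exact hfb _
      have hae1 : ∀ᵐ p ∂(m y), p.1 = y := by
        rw [ae_iff]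
        refine measure_mono_null ?_ hy
        intro p hp
        simp only [Set.mem_setOf_eq] at hp
        exact ⟨hp, trivial⟩
      have hGint : (fun p => G p) = fun p => ∑ i : Fin d,
          ({q : unitInterval × (ℕ → Fin d) | q.2 0 = i}).indicator
            (fun q => f (τ i q.1)) p := rfl
      rw [hGint, integral_finset_sum _ (fun i _ => hInt i)]
      refine Finset.sum_congr rfl fun i _ => ?_
      have hae : (fun p : unitInterval × (ℕ → Fin d) =>
            ({q : unitInterval × (ℕ → Fin d) | q.2 0 = i}).indicator
              (fun q => f (τ i q.1)) p)
          =ᵐ[m y] (({y} : Set unitInterval) ×ˢ {w : ℕ → Fin d | w 0 = i}).indicator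
              (fun _ => f (τ i y)) := by
        filter_upwards [hae1] with p hp
        by_cases h : p.2 0 = i
        · rw [Set.indicator_of_mem
            (show p ∈ {q : unitInterval × (ℕ → Fin d) | q.2 0 = i} from h),
            Set.indicator_of_mem
            (show p ∈ (({y} : Set unitInterval) ×ˢ {w : ℕ → Fin d | w 0 = i}) from
              ⟨hp, h⟩), hp]
        · rw [Set.indicator_of_notMem
            (show p ∉ {q : unitInterval × (ℕ → Fin d) | q.2 0 = i} from h),
            Set.indicator_of_notMem
            (show p ∉ (({y} : Set unitInterval) ×ˢ {w : ℕ → Fin d | w 0 = i}) from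
              fun hm => h hm.2)]
      rw [integral_congr_ae hae, integral_indicator_const _ (hSmeas y i), smul_eq_mul]
      rfl
    calc ∫ y, ∑ i : Fin d,
            (m y (({y} : Set unitInterval) ×ˢ {w : ℕ → Fin d | w 0 = i})).toReal
              * f (τ i y) ∂ν
        = ∫ y, (∫ p, G p ∂(m y)) ∂ν := (integral_congr_ae key).symm
      _ = ∫ p, G p ∂nuhat := h1.symm
      _ = ∫ p, f (τ (p.2 0) p.1) ∂nuhat := integral_congr_ae (ae_of_all _ hGeq)
      _ = ∫ p, f p.1 ∂nuhat := hhol f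
      _ = ∫ y, f y ∂ν := by
          rw [hν]
          exact (integral_map measurable_fst.aemeasurable
            f.continuous.measurable.aestronglyMeasurable).symm
end
end

section
/- Let $\phi\in\mathbb{B}^+$, $\rho>0$ and $h\in\mathbb{B}^+$ satisfy $P_\phi h=\rho h$ pointwise on $[0,1]$. Let $\nu$ be a Borel probability measure on $[0,1]$ and let $v_0,\dots,v_{d-1}:[0,1]\to(0,1]$ be Borel measurable with $\sum_{i=0}^{d-1}v_i(x)=1$ for all $x$, such that $\int\sum_{i=0}^{d-1}v_i(x)f(\tau_i(x))\,d\nu(x)=\int f\,d\nu$ for every bounded Borel $f:[0,1]\to\mathbb{R}$. Then $-\int\sum_{i=0}^{d-1}v_i\ln v_i\,d\nu+\int\ln\phi\,d\nu\le\ln\rho$. -/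
open MeasureTheory

noncomputable section

/-- `f ∈ 𝔹⁺` : Borel measurable and bounded away from `0` and `∞`. -/
def MemBplus (f : unitInterval → ℝ) : Prop :=
  Measurable f ∧ ∃ c C : ℝ, 0 < c ∧ (∀ x, c ≤ f x) ∧ (∀ x, f x ≤ C)

/-- Bounded measurable functions are integrable w.r.t. a finite measure. -/
lemma integrable_of_bdd {f : unitInterval → ℝ} (ν : Measure unitInterval)
    [IsFiniteMeasure ν] (hf : Measurable f) {M : ℝ} (hM : ∀ x, |f x| ≤ M) :
    Integrable f ν :=
  (integrable_const M).mono' hf.aestronglyMeasurable (Filter.Eventually.of_forall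
    (fun x => by simpa using hM x))

/-- Gibbs' inequality. -/
lemma gibbs {d : ℕ} (v a : Fin d → ℝ) (hv : ∀ i, 0 < v i) (ha : ∀ i, 0 < a i)
    (hsum : ∑ i, v i = 1) :
    ∑ i, v i * (Real.log (a i) - Real.log (v i)) ≤ Real.log (∑ i, a i) := by
  have hne : Nonempty (Fin d) := by
    by_contra hc
    rw [not_nonempty_iff] at hc
    simp [Finset.univ_eq_empty] at hsum
  set S := ∑ i, a i with hS
  have hSpos : 0 < S := Finset.sum_pos (fun i _ => ha i) (by simpa using Finset.univ_nonempty)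
  have key : ∀ i, v i * (Real.log (a i) - Real.log (v i) - Real.log S)
      ≤ a i / S - v i := by
    intro i
    have h1 : 0 < a i / (v i * S) := div_pos (ha i) (mul_pos (hv i) hSpos)
    have h2 : Real.log (a i / (v i * S)) ≤ a i / (v i * S) - 1 :=
      Real.log_le_sub_one_of_pos h1
    have h3 : Real.log (a i / (v i * S)) =
        Real.log (a i) - Real.log (v i) - Real.log S := by
      rw [Real.log_div (ha i).ne' (mul_pos (hv i) hSpos).ne',
        Real.log_mul (hv i).ne' hSpos.ne']
      ring
    have h4 : v i * (a i / (v i * S) - 1) = a i / S - v i := by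
      have hv' : v i ≠ 0 := (hv i).ne'
      have hS' : S ≠ 0 := hSpos.ne'
      field_simp
    calc v i * (Real.log (a i) - Real.log (v i) - Real.log S)
        = v i * Real.log (a i / (v i * S)) := by rw [h3]
      _ ≤ v i * (a i / (v i * S) - 1) := by
          exact mul_le_mul_of_nonneg_left h2 (hv i).le
      _ = a i / S - v i := h4
  have hsum2 : ∑ i, (a i / S - v i) = 0 := by
    rw [Finset.sum_sub_distrib, hsum, ← Finset.sum_div, ← hS,
      div_self hSpos.ne']
    ring
  have hle : ∑ i, v i * (Real.log (a i) - Real.log (v i) - Real.log S)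
      ≤ ∑ i, (a i / S - v i) := Finset.sum_le_sum (fun i _ => key i)
  rw [hsum2] at hle
  have hexp : ∑ i, v i * (Real.log (a i) - Real.log (v i) - Real.log S)
      = (∑ i, v i * (Real.log (a i) - Real.log (v i))) - Real.log S := by
    simp only [sub_sub, mul_sub, mul_add]
    rw [Finset.sum_sub_distrib, Finset.sum_add_distrib, ← Finset.sum_mul, hsum, one_mul,
      Finset.sum_sub_distrib]
    ring
  rw [hexp] at hle
  linarith

theorem stmt3 {d : ℕ} (hd : 1 ≤ d) (τ : Fin d → unitInterval → unitInterval)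
    (hτ : ∀ i, Continuous (τ i))
    (φ : unitInterval → ℝ) (hφ : MemBplus φ)
    (ρ : ℝ) (hρ : 0 < ρ) (h : unitInterval → ℝ) (hh : MemBplus h)
    (heig : ∀ x, (∑ i : Fin d, φ (τ i x) * h (τ i x)) = ρ * h x)
    (ν : Measure unitInterval) [IsProbabilityMeasure ν]
    (v : Fin d → unitInterval → ℝ) (hvmeas : ∀ i, Measurable (v i))
    (hvpos : ∀ i x, 0 < v i x) (hvle : ∀ i x, v i x ≤ 1)
    (hvsum : ∀ x, ∑ i : Fin d, v i x = 1)
    (hinv : ∀ f : unitInterval → ℝ, Measurable f → (∃ C : ℝ, ∀ x, |f x| ≤ C) →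
      (∫ x, ∑ i : Fin d, v i x * f (τ i x) ∂ν) = ∫ x, f x ∂ν) :
    (-(∫ x, ∑ i : Fin d, v i x * Real.log (v i x) ∂ν))
      + (∫ x, Real.log (φ x) ∂ν) ≤ Real.log ρ := by
  obtain ⟨hφm, c1, C1, hc1, hφlb, hφub⟩ := hφ
  obtain ⟨hhm, c2, C2, hc2, hhlb, hhub⟩ := hh
  have hφpos : ∀ x, 0 < φ x := fun x => lt_of_lt_of_le hc1 (hφlb x)
  have hhpos : ∀ x, 0 < h x := fun x => lt_of_lt_of_le hc2 (hhlb x)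
  -- bounds on log φ and log h
  have logbd : ∀ (f : unitInterval → ℝ) (c C : ℝ), 0 < c → (∀ x, c ≤ f x) →
      (∀ x, f x ≤ C) → ∀ x, |Real.log (f x)| ≤ |Real.log c| + |Real.log C| := by
    intro f c C hc hlb hub x
    have h1 : Real.log c ≤ Real.log (f x) :=
      Real.log_le_log hc (hlb x)
    have h2 : Real.log (f x) ≤ Real.log C :=
      Real.log_le_log (lt_of_lt_of_le hc (hlb x)) (hub x)
    rw [abs_le]
    constructor
    · have := neg_abs_le (Real.log c); have := abs_nonneg (Real.log C); linarith
    · have := le_abs_self (Real.log C); have := abs_nonneg (Real.log c); linarith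
  set Mφ := |Real.log c1| + |Real.log C1| with hMφ
  set Mh := |Real.log c2| + |Real.log C2| with hMh
  have hlogφbd : ∀ x, |Real.log (φ x)| ≤ Mφ := logbd φ c1 C1 hc1 hφlb hφub
  have hloghbd : ∀ x, |Real.log (h x)| ≤ Mh := logbd h c2 C2 hc2 hhlb hhub
  -- g = log φ + log h
  set g : unitInterval → ℝ := fun x => Real.log (φ x) + Real.log (h x) with hg
  have hgm : Measurable g := (Real.measurable_log.comp hφm).add
    (Real.measurable_log.comp hhm)
  have hgbd : ∀ x, |g x| ≤ Mφ + Mh := fun x =>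
    (abs_add_le _ _).trans (add_le_add (hlogφbd x) (hloghbd x))
  -- integrability
  have intA : Integrable (fun x => ∑ i : Fin d, v i x * Real.log (v i x)) ν := by
    apply integrable_of_bdd ν
    · exact Finset.measurable_sum _ (fun i _ =>
        (hvmeas i).mul (Real.measurable_log.comp (hvmeas i)))
    · intro x
      calc |∑ i : Fin d, v i x * Real.log (v i x)|
          ≤ ∑ i : Fin d, |v i x * Real.log (v i x)| := Finset.abs_sum_le_sum_abs _ _
        _ ≤ ∑ _i : Fin d, (1 : ℝ) := by
            apply Finset.sum_le_sum
            intro i _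
            have := Real.abs_log_mul_self_lt (v i x) (hvpos i x) (hvle i x)
            rw [abs_mul] at this ⊢
            rw [mul_comm]
            exact this.le
        _ = (d : ℝ) := by simp
  have intB : Integrable (fun x => ∑ i : Fin d, v i x * g (τ i x)) ν := by
    apply integrable_of_bdd ν
    · exact Finset.measurable_sum _ (fun i _ =>
        (hvmeas i).mul (hgm.comp (hτ i).measurable))
    · intro x
      calc |∑ i : Fin d, v i x * g (τ i x)|
          ≤ ∑ i : Fin d, |v i x * g (τ i x)| := Finset.abs_sum_le_sum_abs _ _
        _ ≤ ∑ _i : Fin d, (Mφ + Mh) := by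
            apply Finset.sum_le_sum
            intro i _
            rw [abs_mul]
            calc |v i x| * |g (τ i x)| ≤ 1 * (Mφ + Mh) := by
                  apply mul_le_mul
                  · rw [abs_of_pos (hvpos i x)]; exact hvle i x
                  · exact hgbd _
                  · exact abs_nonneg _
                  · norm_num
              _ = Mφ + Mh := one_mul _
        _ = d * (Mφ + Mh) := by
            rw [Finset.sum_const, Finset.card_univ, Fintype.card_fin, nsmul_eq_mul]
  have intC : Integrable (fun x => Real.log (h x)) ν :=
    integrable_of_bdd ν (Real.measurable_log.comp hhm) hloghbd
  have intφ : Integrable (fun x => Real.log (φ x)) ν :=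
    integrable_of_bdd ν (Real.measurable_log.comp hφm) hlogφbd
  -- pointwise key inequality
  have key : ∀ x, ((∑ i : Fin d, v i x * g (τ i x))
      - ∑ i : Fin d, v i x * Real.log (v i x)) - Real.log (h x) ≤ Real.log ρ := by
    intro x
    have hgibbs := gibbs (fun i => v i x) (fun i => φ (τ i x) * h (τ i x))
      (fun i => hvpos i x) (fun i => mul_pos (hφpos _) (hhpos _)) (hvsum x)
    rw [heig x, Real.log_mul hρ.ne' (hhpos x).ne'] at hgibbs
    have hrw : ∀ i : Fin d, Real.log (φ (τ i x) * h (τ i x)) = g (τ i x) := by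
      intro i
      rw [Real.log_mul (hφpos _).ne' (hhpos _).ne']
    have hexp : ∑ i : Fin d, v i x * (Real.log (φ (τ i x) * h (τ i x))
        - Real.log (v i x)) = (∑ i : Fin d, v i x * g (τ i x))
        - ∑ i : Fin d, v i x * Real.log (v i x) := by
      rw [← Finset.sum_sub_distrib]
      apply Finset.sum_congr rfl
      intro i _
      rw [hrw i]
      ring
    rw [hexp] at hgibbs
    linarith
  -- integrate
  have int1 : Integrable (fun x => (∑ i : Fin d, v i x * g (τ i x))
      - ∑ i : Fin d, v i x * Real.log (v i x)) ν := intB.sub intA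
  have hF : Integrable (fun x => ((∑ i : Fin d, v i x * g (τ i x))
      - ∑ i : Fin d, v i x * Real.log (v i x)) - Real.log (h x)) ν := int1.sub intC
  have hmono := integral_mono hF (integrable_const (Real.log ρ)) key
  rw [integral_const] at hmono
  simp only [probReal_univ, ENNReal.toReal_one, one_smul] at hmono
  rw [integral_sub int1 intC, integral_sub intB intA] at hmono
  have hinvg := hinv g hgm ⟨Mφ + Mh, hgbd⟩
  have hgint : ∫ x, g x ∂ν = (∫ x, Real.log (φ x) ∂ν)
      + ∫ x, Real.log (h x) ∂ν := integral_add intφ intC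
  rw [hinvg, hgint] at hmono
  linarith
end
end

section
/- Let $v_0,\dots,v_{d-1}:[0,1]\to[0,1]$ be Borel measurable with $\sum_{i=0}^{d-1}v_i=1$, and let $\nu$ be a Borel probability measure on $[0,1]$ such that $\int\sum_{i=0}^{d-1}v_i(x)f(\tau_i(x))\,d\nu(x)=\int f\,d\nu$ for every bounded Borel $f:[0,1]\to\mathbb{R}$. Let $\hat{\nu}$ be a Borel probability measure on $[0,1]\times\Sigma$ whose projection to $[0,1]$ is $\nu$ and which satisfies, for every $i\in\{0,\dots,d-1\}$ and every bounded Borel $g:[0,1]\to\mathbb{R}$: $\int_{\{(x,w):\,w_1=i\}}g(x)\,d\hat{\nu}(x,w)=\int g(x)\,v_i(x)\,d\nu(x)$. Then $\hat{\nu}$ is holonomic. -/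
open MeasureTheory

noncomputable section

theorem stmt4 {d : ℕ} (hd : 1 ≤ d) (τ : Fin d → unitInterval → unitInterval)
    (hτ : ∀ i, Continuous (τ i))
    (v : Fin d → unitInterval → ℝ) (hvmeas : ∀ i, Measurable (v i))
    (hv0 : ∀ i x, 0 ≤ v i x) (hv1 : ∀ i x, v i x ≤ 1)
    (hvsum : ∀ x, ∑ i : Fin d, v i x = 1)
    (ν : Measure unitInterval) [IsProbabilityMeasure ν]
    (hinv : ∀ f : unitInterval → ℝ, Measurable f → (∃ C : ℝ, ∀ x, |f x| ≤ C) →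
      (∫ x, ∑ i : Fin d, v i x * f (τ i x) ∂ν) = ∫ x, f x ∂ν)
    (nuhat : Measure (unitInterval × (ℕ → Fin d))) [IsProbabilityMeasure nuhat]
    (hproj : Measure.map Prod.fst nuhat = ν)
    (hfiber : ∀ i : Fin d, ∀ g : unitInterval → ℝ, Measurable g →
      (∃ C : ℝ, ∀ x, |g x| ≤ C) →
      (∫ p in {p : unitInterval × (ℕ → Fin d) | p.2 0 = i}, g p.1 ∂nuhat)
        = ∫ x, g x * v i x ∂ν) :
    IsHolonomic τ nuhat := by
  intro f
  have hfb : ∀ x, |f x| ≤ ‖f‖ := fun x => by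
    simpa [Real.norm_eq_abs] using f.norm_coe_le_norm x
  have hfm : Measurable (f : unitInterval → ℝ) := f.continuous.measurable
  -- RHS
  have hRHS : ∫ p, f p.1 ∂nuhat = ∫ x, f x ∂ν := by
    rw [← hproj]
    exact (integral_map measurable_fst.aemeasurable
      f.continuous.aestronglyMeasurable).symm
  -- measurable sets
  have hSmeas : ∀ i : Fin d, MeasurableSet {p : unitInterval × (ℕ → Fin d) | p.2 0 = i} := by
    intro i
    have he : {p : unitInterval × (ℕ → Fin d) | p.2 0 = i}
        = (fun p : unitInterval × (ℕ → Fin d) => p.2 0) ⁻¹' {i} := rfl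
    rw [he]
    exact (Measurable.eval (a := (0:ℕ)) measurable_snd) (MeasurableSet.singleton i)
  -- integrability of each piece on nuhat
  have hint : ∀ i : Fin d, Integrable (fun p : unitInterval × (ℕ → Fin d) => f (τ i p.1)) nuhat := by
    intro i
    refine (integrable_const ‖f‖).mono' ?_ ?_
    · exact ((hfm.comp (hτ i).measurable).comp measurable_fst).aestronglyMeasurable
    · filter_upwards with p
      simpa [Real.norm_eq_abs] using hfb (τ i p.1)
  -- pointwise decomposition
  have hdecomp : ∀ p : unitInterval × (ℕ → Fin d),
      f (τ (p.2 0) p.1) = ∑ i : Fin d,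
        Set.indicator {q : unitInterval × (ℕ → Fin d) | q.2 0 = i}
          (fun q => f (τ i q.1)) p := by
    intro p
    have : ∀ i : Fin d,
        Set.indicator {q : unitInterval × (ℕ → Fin d) | q.2 0 = i}
          (fun q => f (τ i q.1)) p = if p.2 0 = i then f (τ i p.1) else 0 := by
      intro i
      by_cases h : p.2 0 = i <;> simp [Set.indicator, h]
    simp only [this]
    simp
  have hLHS : ∫ p, f (τ (p.2 0) p.1) ∂nuhat
      = ∑ i : Fin d, ∫ p in {q : unitInterval × (ℕ → Fin d) | q.2 0 = i},
          f (τ i p.1) ∂nuhat := by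
    calc ∫ p, f (τ (p.2 0) p.1) ∂nuhat
        = ∫ p, (∑ i : Fin d,
            Set.indicator {q : unitInterval × (ℕ → Fin d) | q.2 0 = i}
              (fun q => f (τ i q.1)) p) ∂nuhat := by
          exact integral_congr_ae (Filter.Eventually.of_forall hdecomp)
      _ = ∑ i : Fin d, ∫ p,
            Set.indicator {q : unitInterval × (ℕ → Fin d) | q.2 0 = i}
              (fun q => f (τ i q.1)) p ∂nuhat := by
          refine integral_finset_sum _ (fun i _ => ?_)
          exact (hint i).indicator (hSmeas i)
      _ = ∑ i : Fin d, ∫ p in {q : unitInterval × (ℕ → Fin d) | q.2 0 = i},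
            f (τ i p.1) ∂nuhat := by
          refine Finset.sum_congr rfl (fun i _ => ?_)
          exact integral_indicator (hSmeas i)
  rw [hLHS, hRHS]
  have hfib : ∀ i : Fin d,
      (∫ p in {q : unitInterval × (ℕ → Fin d) | q.2 0 = i}, f (τ i p.1) ∂nuhat)
        = ∫ x, f (τ i x) * v i x ∂ν := by
    intro i
    exact hfiber i (fun x => f (τ i x)) (hfm.comp (hτ i).measurable)
      ⟨‖f‖, fun x => hfb (τ i x)⟩
  simp only [hfib]
  have hintν : ∀ i : Fin d, Integrable (fun x => f (τ i x) * v i x) ν := by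
    intro i
    refine (integrable_const ‖f‖).mono' ?_ ?_
    · exact ((hfm.comp (hτ i).measurable).mul (hvmeas i)).aestronglyMeasurable
    · filter_upwards with x
      have h1 : |f (τ i x) * v i x| ≤ |f (τ i x)| * 1 := by
        rw [abs_mul]
        exact mul_le_mul_of_nonneg_left
          (abs_le.mpr ⟨by linarith [hv0 i x], hv1 i x⟩) (abs_nonneg _)
      have h2 : |f (τ i x)| * 1 ≤ ‖f‖ := by simpa using hfb (τ i x)
      show ‖_‖ ≤ ‖f‖
      rw [Real.norm_eq_abs]
      exact h1.trans h2
  rw [← integral_finset_sum _ (fun i _ => hintν i)]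
  rw [← hinv f hfm ⟨‖f‖, hfb⟩]
  congr 1
  funext x
  exact Finset.sum_congr rfl (fun i _ => mul_comm _ _)
end
end

section
/- Let $v_0,\dots,v_{d-1}:[0,1]\to[0,1]$ be Borel measurable with $\sum_{i=0}^{d-1}v_i=1$, and let $\nu$ be a Borel probability measure on $[0,1]$ such that $\int\sum_{i=0}^{d-1}v_i(x)f(\tau_i(x))\,d\nu(x)=\int f\,d\nu$ for every bounded Borel $f:[0,1]\to\mathbb{R}$. Let $\hat{\nu}$ be a Borel probability measure on $[0,1]\times\Sigma$ whose projection to $[0,1]$ is $\nu$ and which satisfies, for every $n\ge 1$, every word $(i_1,\dots,i_n)\in\{0,\dots,d-1\}^n$ and every bounded Borel $g:[0,1]\to\mathbb{R}$: $\int_{\{(x,w):\,w_1=i_1,\dots,w_n=i_n\}}g(x)\,d\hat{\nu}(x,w)=\int g(x)\,v_{i_1}(x)\,v_{i_2}(\tau_{i_1}(x))\cdots v_{i_n}(\tau_{i_{n-1}}\circ\cdots\circ\tau_{i_1}(x))\,d\nu(x)$. Then $\hat{\nu}$ is $\hat{\sigma}$-invariant, i.e. the pushforward of $\hat{\nu}$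 by $\hat{\sigma}$ equals $\hat{\nu}$. -/
open MeasureTheory

noncomputable section

/-- The skew product map on `[0,1] × Σ`. -/
def sigmaHat {d : ℕ} (τ : Fin d → unitInterval → unitInterval) :
    unitInterval × (ℕ → Fin d) → unitInterval × (ℕ → Fin d) :=
  fun p => (τ (p.2 0) p.1, fun n => p.2 (n + 1))

/-- The `k`-branch `Z_k(x,w) = τ_{w_k} ∘ ⋯ ∘ τ_{w_1}(x)`. -/
def orbitZ {d : ℕ} (τ : Fin d → unitInterval → unitInterval) :
    ℕ → unitInterval → (ℕ → Fin d) → unitInterval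
  | 0, x, _ => x
  | (k + 1), x, w => τ (w k) (orbitZ τ k x w)

namespace Stmt5Aux

open Set

variable {d : ℕ}

/-- Cylinder set fixing the first `n` coordinates to those of `w`. -/
def cyl (n : ℕ) (w : ℕ → Fin d) : Set (ℕ → Fin d) := {ω | ∀ k < n, ω k = w k}

/-- The family of all cylinder sets. -/
def cylFam (d : ℕ) : Set (Set (ℕ → Fin d)) := {C | ∃ n w, C = cyl n w}

lemma measurableSet_cyl (n : ℕ) (w : ℕ → Fin d) : MeasurableSet (cyl n w) := by
  have : cyl n w = ⋂ (k : ℕ) (_ : k < n), (fun ω : ℕ → Fin d => ω k) ⁻¹' {w k} := by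
    ext ω; simp [cyl]
  rw [this]
  exact MeasurableSet.iInter fun k => MeasurableSet.iInter fun _ =>
    (measurable_pi_apply k) (measurableSet_singleton _)

lemma cyl_zero (w : ℕ → Fin d) : cyl 0 w = univ := by
  ext ω; simp [cyl]

lemma eval_eq_iUnion (k : ℕ) (i : Fin d) :
    {ω : ℕ → Fin d | ω k = i} =
      ⋃ u : Fin k → Fin d, cyl (k + 1) (fun m => if h : m < k then u ⟨m, h⟩ else i) := by
  ext ω
  simp only [mem_setOf_eq, mem_iUnion]
  constructor
  · intro h
    refine ⟨fun m => ω m, fun m hm => ?_⟩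
    by_cases hmk : m < k
    · simp [hmk]
    · have : m = k := by omega
      simp [this, hmk, h]
  · rintro ⟨u, hu⟩
    have := hu k (Nat.lt_succ_self k)
    simpa using this

lemma generateFrom_cylFam (hd : 1 ≤ d) :
    (inferInstance : MeasurableSpace (ℕ → Fin d)) =
      MeasurableSpace.generateFrom (cylFam d) := by
  refine le_antisymm ?_ (MeasurableSpace.generateFrom_le ?_)
  · have heval : ∀ k : ℕ, @Measurable _ _ (MeasurableSpace.generateFrom (cylFam d)) _
        (fun ω : ℕ → Fin d => ω k) := by
      intro k
      refine @measurable_to_countable' (Fin d) (ℕ → Fin d) _ _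
        (MeasurableSpace.generateFrom (cylFam d)) _ (fun i => ?_)
      have : (fun ω : ℕ → Fin d => ω k) ⁻¹' {i} = {ω : ℕ → Fin d | ω k = i} := by
        ext ω; simp
      rw [this, eval_eq_iUnion]
      exact MeasurableSet.iUnion fun u =>
        MeasurableSpace.measurableSet_generateFrom ⟨k + 1, _, rfl⟩
    exact iSup_le fun k => measurable_iff_comap_le.mp (heval k)
  · rintro C ⟨n, w, rfl⟩
    exact measurableSet_cyl n w

lemma isPiSystem_cylFam : IsPiSystem (cylFam d) := by
  rintro C ⟨n, w, rfl⟩ C' ⟨m, w', rfl⟩ hne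
  obtain ⟨ω₀, hω₀⟩ := hne
  obtain ⟨h1, h2⟩ := hω₀
  refine ⟨max n m, fun k => if k < n then w k else w' k, ?_⟩
  ext ω
  simp only [cyl, mem_inter_iff, mem_setOf_eq]
  constructor
  · rintro ⟨ha, hb⟩ k hk
    by_cases hkn : k < n
    · simp [hkn, ha k hkn]
    · have hkm : k < m := by omega
      simp [hkn, hb k hkm]
  · intro h
    constructor
    · intro k hk
      have := h k (lt_of_lt_of_le hk (le_max_left n m))
      simpa [hk] using this
    · intro k hk
      have := h k (lt_of_lt_of_le hk (le_max_right n m))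
      by_cases hkn : k < n
      · rw [h k (lt_of_lt_of_le hkn (le_max_left n m))]
        simp only [hkn, if_true]
        rw [← h1 k hkn, h2 k hk]
      · simpa [hkn] using this

lemma isCountablySpanning_cylFam (hd : 1 ≤ d) : IsCountablySpanning (cylFam d) := by
  refine ⟨fun _ => univ, fun _ => ⟨0, fun _ => ⟨0, hd⟩, (cyl_zero _).symm⟩, ?_⟩
  exact iUnion_const _

/-- Prepend a letter to a word. -/
def cons (j : Fin d) (w : ℕ → Fin d) : ℕ → Fin d :=
  fun m => Nat.casesOn m j w

@[simp] lemma cons_zero (j : Fin d) (w : ℕ → Fin d) : cons j w 0 = j := rfl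
@[simp] lemma cons_succ (j : Fin d) (w : ℕ → Fin d) (k : ℕ) : cons j w (k + 1) = w k := rfl


@[simp] lemma orbitZ_zero (τ : Fin d → unitInterval → unitInterval) (x : unitInterval)
    (w : ℕ → Fin d) : orbitZ τ 0 x w = x := rfl

lemma orbitZ_cons (τ : Fin d → unitInterval → unitInterval) (j : Fin d) (w : ℕ → Fin d)
    (k : ℕ) (x : unitInterval) :
    orbitZ τ (k + 1) x (cons j w) = orbitZ τ k (τ j x) w := by
  induction k with
  | zero => rfl
  | succ k ih =>
      rw [show orbitZ τ (k + 1 + 1) x (cons j w)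
          = τ (cons j w (k + 1)) (orbitZ τ (k + 1) x (cons j w)) from rfl,
        cons_succ, ih]
      rfl

lemma continuous_orbitZ (τ : Fin d → unitInterval → unitInterval)
    (hτ : ∀ i, Continuous (τ i)) (k : ℕ) (w : ℕ → Fin d) :
    Continuous fun x => orbitZ τ k x w := by
  induction k with
  | zero => exact continuous_id
  | succ k ih => exact (hτ (w k)).comp ih

end Stmt5Aux


theorem stmt5 {d : ℕ} (hd : 1 ≤ d) (τ : Fin d → unitInterval → unitInterval)
    (hτ : ∀ i, Continuous (τ i))
    (v : Fin d → unitInterval → ℝ) (hvmeas : ∀ i, Measurable (v i))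
    (hv0 : ∀ i x, 0 ≤ v i x) (hv1 : ∀ i x, v i x ≤ 1)
    (hvsum : ∀ x, ∑ i : Fin d, v i x = 1)
    (ν : Measure unitInterval) [IsProbabilityMeasure ν]
    (hinv : ∀ f : unitInterval → ℝ, Measurable f → (∃ C : ℝ, ∀ x, |f x| ≤ C) →
      (∫ x, ∑ i : Fin d, v i x * f (τ i x) ∂ν) = ∫ x, f x ∂ν)
    (nuhat : Measure (unitInterval × (ℕ → Fin d))) [IsProbabilityMeasure nuhat]
    (hproj : Measure.map Prod.fst nuhat = ν)
    (hcyl : ∀ n : ℕ, 1 ≤ n → ∀ w : ℕ → Fin d, ∀ g : unitInterval → ℝ,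
      Measurable g → (∃ C : ℝ, ∀ x, |g x| ≤ C) →
      (∫ p in {p : unitInterval × (ℕ → Fin d) | ∀ k < n, p.2 k = w k},
          g p.1 ∂nuhat)
        = ∫ x, g x * ∏ k ∈ Finset.range n, v (w k) (orbitZ τ k x w) ∂ν) :
    Measure.map (sigmaHat τ) nuhat = nuhat := by
  classical
  have hτm : ∀ i, Measurable (τ i) := fun i => (hτ i).measurable
  have hσ : Measurable (sigmaHat τ) := by
    apply Measurable.prod
    · have h1 : Measurable fun q : unitInterval × Fin d => τ q.2 q.1 :=
        measurable_from_prod_countable_left fun j => hτm j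
      exact h1.comp (measurable_fst.prodMk ((measurable_pi_apply 0).comp measurable_snd))
    · exact measurable_pi_lambda _ fun n => (measurable_pi_apply (n + 1)).comp measurable_snd
  haveI : IsProbabilityMeasure (Measure.map (sigmaHat τ) nuhat) :=
    Measure.isProbabilityMeasure_map hσ.aemeasurable
  have integ : ∀ f : unitInterval → ℝ, Measurable f → (∀ x, |f x| ≤ 1) → Integrable f ν :=
    fun f hf hb => ⟨hf.aestronglyMeasurable,
      HasFiniteIntegral.of_bounded (C := 1) (Filter.Eventually.of_forall fun x => by
        simpa [Real.norm_eq_abs] using hb x)⟩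
  have hPmeas : ∀ (n : ℕ) (w : ℕ → Fin d),
      Measurable fun x => ∏ k ∈ Finset.range n, v (w k) (orbitZ τ k x w) :=
    fun n w => Finset.measurable_prod _ fun k _ =>
      (hvmeas (w k)).comp (Stmt5Aux.continuous_orbitZ τ hτ k w).measurable
  have hP0 : ∀ (n : ℕ) (w : ℕ → Fin d) (x : unitInterval),
      0 ≤ ∏ k ∈ Finset.range n, v (w k) (orbitZ τ k x w) :=
    fun n w x => Finset.prod_nonneg fun k _ => hv0 _ _
  have hP1 : ∀ (n : ℕ) (w : ℕ → Fin d) (x : unitInterval),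
      (∏ k ∈ Finset.range n, v (w k) (orbitZ τ k x w)) ≤ 1 :=
    fun n w x => Finset.prod_le_one (fun k _ => hv0 _ _) fun k _ => hv1 _ _
  -- Key formula for the measure of a rectangle with a cylinder base.
  have key : ∀ (A : Set unitInterval), MeasurableSet A → ∀ (n : ℕ) (w : ℕ → Fin d),
      (nuhat (A ×ˢ Stmt5Aux.cyl n w)).toReal
        = ∫ x, A.indicator 1 x * ∏ k ∈ Finset.range n, v (w k) (orbitZ τ k x w) ∂ν := by
    intro A hA n w
    rcases Nat.eq_zero_or_pos n with hn | hn
    · subst hn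
      rw [Stmt5Aux.cyl_zero, Set.prod_univ]
      simp only [Finset.range_zero, Finset.prod_empty, mul_one]
      have h1 : nuhat (Prod.fst ⁻¹' A) = ν A := by
        rw [← hproj, Measure.map_apply measurable_fst hA]
      rw [h1, integral_indicator_one hA, measureReal_def]
    · rw [← hcyl n hn w (A.indicator 1) (measurable_one.indicator hA)
        ⟨1, fun x => by by_cases h : x ∈ A <;> simp [Set.indicator_apply, h]⟩]
      have h2 : ∀ p : unitInterval × (ℕ → Fin d),
          A.indicator (1 : unitInterval → ℝ) p.1
            = (Prod.fst ⁻¹' A).indicator (1 : unitInterval × (ℕ → Fin d) → ℝ) p := fun p => by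
        by_cases h : p.1 ∈ A <;> simp [Set.indicator_apply, h]
      simp_rw [h2]
      rw [setIntegral_indicator (measurable_fst hA)]
      have hset : {p : unitInterval × (ℕ → Fin d) | ∀ k < n, p.2 k = w k} ∩ (Prod.fst ⁻¹' A)
          = A ×ˢ Stmt5Aux.cyl n w := by
        ext p
        simp only [Set.mem_inter_iff, Set.mem_setOf_eq, Set.mem_preimage, Set.mem_prod,
          Stmt5Aux.cyl]
        tauto
      rw [hset]
      simp
      rfl
  -- Equality of the two measures on rectangles.
  have main : ∀ (A : Set unitInterval), MeasurableSet A → ∀ (n : ℕ) (w : ℕ → Fin d),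
      Measure.map (sigmaHat τ) nuhat (A ×ˢ Stmt5Aux.cyl n w)
        = nuhat (A ×ˢ Stmt5Aux.cyl n w) := by
    intro A hA n w
    rw [Measure.map_apply hσ (hA.prod (Stmt5Aux.measurableSet_cyl n w))]
    have hpre : sigmaHat τ ⁻¹' (A ×ˢ Stmt5Aux.cyl n w)
        = ⋃ j : Fin d, (τ j ⁻¹' A) ×ˢ Stmt5Aux.cyl (n + 1) (Stmt5Aux.cons j w) := by
      ext ⟨x, ω⟩
      simp only [Set.mem_preimage, sigmaHat, Set.mem_prod, Stmt5Aux.cyl, Set.mem_setOf_eq,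
        Set.mem_iUnion]
      constructor
      · rintro ⟨hxA, hω⟩
        refine ⟨ω 0, hxA, fun k hk => ?_⟩
        cases k with
        | zero => rfl
        | succ k => exact hω k (by omega)
      · rintro ⟨j, hxA, hω⟩
        have h0 : ω 0 = j := hω 0 (by omega)
        exact ⟨h0 ▸ hxA, fun k hk => hω (k + 1) (by omega)⟩
    rw [hpre]
    have hmeasS : ∀ j : Fin d,
        MeasurableSet ((τ j ⁻¹' A) ×ˢ Stmt5Aux.cyl (n + 1) (Stmt5Aux.cons j w)) :=
      fun j => ((hτm j) hA).prod (Stmt5Aux.measurableSet_cyl _ _)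
    have hdisj : Pairwise (Function.onFun Disjoint fun j : Fin d =>
        (τ j ⁻¹' A) ×ˢ Stmt5Aux.cyl (n + 1) (Stmt5Aux.cons j w)) := by
      intro j j' hjj'
      refine Set.disjoint_left.mpr ?_
      rintro ⟨x, ω⟩ ⟨_, h1⟩ ⟨_, h2⟩
      exact hjj' ((h1 0 (by omega)).symm.trans (h2 0 (by omega)))
    rw [measure_iUnion hdisj hmeasS, tsum_fintype]
    refine (ENNReal.toReal_eq_toReal_iff'
      (ENNReal.sum_lt_top.mpr fun j _ => measure_lt_top _ _).ne (measure_ne_top _ _)).mp ?_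
    rw [ENNReal.toReal_sum fun j _ => measure_ne_top _ _, key A hA n w]
    set F : unitInterval → ℝ :=
      fun y => A.indicator 1 y * ∏ k ∈ Finset.range n, v (w k) (orbitZ τ k y w) with hFdef
    have hFmeas : Measurable F := (measurable_one.indicator hA).mul (hPmeas n w)
    have hFbd : ∀ y, |F y| ≤ 1 := by
      intro y
      by_cases hy : y ∈ A
      · rw [hFdef]
        simp only [Set.indicator_of_mem hy, Pi.one_apply, one_mul]
        rw [abs_of_nonneg (hP0 n w y)]
        exact hP1 n w y
      · simp [hFdef, Set.indicator_of_notMem hy]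
    have hj : ∀ j : Fin d,
        (nuhat ((τ j ⁻¹' A) ×ˢ Stmt5Aux.cyl (n + 1) (Stmt5Aux.cons j w))).toReal
          = ∫ x, v j x * F (τ j x) ∂ν := by
      intro j
      rw [key _ ((hτm j) hA) (n + 1) (Stmt5Aux.cons j w)]
      refine integral_congr_ae (Filter.Eventually.of_forall fun x => ?_)
      show (τ j ⁻¹' A).indicator 1 x * ∏ k ∈ Finset.range (n + 1),
          v (Stmt5Aux.cons j w k) (orbitZ τ k x (Stmt5Aux.cons j w)) = v j x * F (τ j x)
      rw [Finset.prod_range_succ']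
      simp only [Stmt5Aux.orbitZ_cons, Stmt5Aux.cons_succ, Stmt5Aux.cons_zero,
        Stmt5Aux.orbitZ_zero]
      have hi : (τ j ⁻¹' A).indicator (1 : unitInterval → ℝ) x
          = A.indicator (1 : unitInterval → ℝ) (τ j x) := by
        by_cases h : τ j x ∈ A <;> simp [Set.indicator_apply, h]
      rw [hi, hFdef]
      ring
    have hint : ∀ j : Fin d, Integrable (fun x => v j x * F (τ j x)) ν := by
      intro j
      refine integ _ ((hvmeas j).mul (hFmeas.comp (hτm j))) fun x => ?_
      rw [abs_mul]
      calc |v j x| * |F (τ j x)| ≤ 1 * 1 :=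
            mul_le_mul (by rw [abs_of_nonneg (hv0 j x)]; exact hv1 j x) (hFbd _)
              (abs_nonneg _) zero_le_one
        _ = 1 := one_mul 1
    have hsum : ∑ j : Fin d, ∫ x, v j x * F (τ j x) ∂ν = ∫ x, F x ∂ν := by
      rw [← integral_finset_sum Finset.univ fun j _ => hint j]
      exact hinv F hFmeas ⟨1, hFbd⟩
    calc ∑ j : Fin d, (nuhat ((τ j ⁻¹' A) ×ˢ Stmt5Aux.cyl (n + 1) (Stmt5Aux.cons j w))).toReal
        = ∑ j : Fin d, ∫ x, v j x * F (τ j x) ∂ν := Finset.sum_congr rfl fun j _ => hj j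
      _ = ∫ x, F x ∂ν := hsum
  -- Conclude by the π-system uniqueness argument.
  have hgen : (inferInstance : MeasurableSpace (unitInterval × (ℕ → Fin d)))
      = MeasurableSpace.generateFrom (Set.image2 (· ×ˢ ·)
          {A : Set unitInterval | MeasurableSet A} (Stmt5Aux.cylFam d)) := by
    rw [← generateFrom_prod_eq isCountablySpanning_measurableSet
      (Stmt5Aux.isCountablySpanning_cylFam hd)]
    have h1 : MeasurableSpace.generateFrom {A : Set unitInterval | MeasurableSet A}
        = (inferInstance : MeasurableSpace unitInterval) :=
      MeasurableSpace.generateFrom_measurableSet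
    have h2 : MeasurableSpace.generateFrom (Stmt5Aux.cylFam d)
        = (inferInstance : MeasurableSpace (ℕ → Fin d)) :=
      (Stmt5Aux.generateFrom_cylFam hd).symm
    rw [h1, h2]
  refine ext_of_generate_finite _ hgen
    (IsPiSystem.prod MeasurableSpace.isPiSystem_measurableSet Stmt5Aux.isPiSystem_cylFam) ?_ ?_
  · rintro s ⟨A, hA, C, ⟨n, w, rfl⟩, rfl⟩
    exact main A hA n w
  · simp
end
end

section
/- For every holonomic probability $\hat{\nu}$ on $[0,1]\times\Sigma$, the entropy satisfies $0\le h(\hat{\nu})\le\ln d$. -/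
open MeasureTheory

noncomputable section

/-- The entropy of a holonomic probability:
`h(ν̂) = inf_{f ∈ 𝔹⁺} ∫ ln ( (∑ i, f(τ_i x)) / f(x) ) dν̂`. -/
def entropy {d : ℕ} (τ : Fin d → unitInterval → unitInterval)
    (nuhat : Measure (unitInterval × (ℕ → Fin d))) : ℝ :=
  sInf {r : ℝ | ∃ f : unitInterval → ℝ, MemBplus f ∧
    r = ∫ p, Real.log ((∑ i : Fin d, f (τ i p.1)) / f p.1) ∂nuhat}

section aux

open scoped NNReal

variable {d : ℕ} (τ : Fin d → unitInterval → unitInterval)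
  (nuhat : Measure (unitInterval × (ℕ → Fin d)))

/-- Integrability of bounded measurable functions w.r.t. a probability measure. -/
lemma aux_integrable {α : Type*} [MeasurableSpace α] (μ : Measure α) [IsFiniteMeasure μ]
    {g : α → ℝ} (hg : Measurable g) (M : ℝ) (h : ∀ p, |g p| ≤ M) :
    Integrable g μ :=
  ⟨hg.aestronglyMeasurable, HasFiniteIntegral.of_bounded (C := M) (Filter.Eventually.of_forall h)⟩

lemma aux_measT (hτ : ∀ i, Continuous (τ i)) :
    Measurable (fun p : unitInterval × (ℕ → Fin d) => τ (p.2 0) p.1) := by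
  have hF : Measurable (fun q : unitInterval × Fin d => τ q.2 q.1) :=
    measurable_from_prod_countable_left fun i => (hτ i).measurable
  exact hF.comp (measurable_fst.prodMk ((measurable_pi_apply 0).comp measurable_snd))

/-- The two natural projections of a holonomic measure agree. -/
lemma aux_map_eq (hτ : ∀ i, Continuous (τ i)) [IsProbabilityMeasure nuhat]
    (hhol : IsHolonomic τ nuhat) :
    nuhat.map (fun p => τ (p.2 0) p.1) = nuhat.map (fun p => p.1) := by
  have hT := aux_measT τ hτ
  apply ext_of_forall_lintegral_eq_of_IsFiniteMeasure
  intro f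
  have hfin1 := BoundedContinuousFunction.lintegral_lt_top_of_nnreal
    (nuhat.map (fun p => τ (p.2 0) p.1)) f
  have hfin2 := BoundedContinuousFunction.lintegral_lt_top_of_nnreal
    (nuhat.map (fun p : unitInterval × (ℕ → Fin d) => p.1)) f
  rw [← ENNReal.toReal_eq_toReal_iff' hfin1.ne hfin2.ne,
    BoundedContinuousFunction.toReal_lintegral_coe_eq_integral,
    BoundedContinuousFunction.toReal_lintegral_coe_eq_integral]
  have hc : Continuous fun x => (f x : ℝ) := NNReal.continuous_coe.comp f.continuous
  rw [integral_map hT.aemeasurable hc.measurable.aestronglyMeasurable,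
    integral_map measurable_fst.aemeasurable hc.measurable.aestronglyMeasurable]
  exact hhol ⟨fun x => (f x : ℝ), hc⟩

end aux

theorem stmt9 {d : ℕ} (hd : 1 ≤ d) (τ : Fin d → unitInterval → unitInterval)
    (hτ : ∀ i, Continuous (τ i))
    (nuhat : Measure (unitInterval × (ℕ → Fin d))) [IsProbabilityMeasure nuhat]
    (hhol : IsHolonomic τ nuhat) :
    0 ≤ entropy τ nuhat ∧ entropy τ nuhat ≤ Real.log (d : ℝ) := by
  set S := {r : ℝ | ∃ f : unitInterval → ℝ, MemBplus f ∧
    r = ∫ p, Real.log ((∑ i : Fin d, f (τ i p.1)) / f p.1) ∂nuhat} with hS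
  -- every element of S is nonnegative
  have key : ∀ r ∈ S, 0 ≤ r := by
    rintro r ⟨f, ⟨hfm, c, C, hc, hcf, hfC⟩, rfl⟩
    have hcC : c ≤ C := le_trans (hcf ⟨0, by norm_num, by norm_num⟩) (hfC _)
    have hfpos : ∀ x, 0 < f x := fun x => lt_of_lt_of_le hc (hcf x)
    have hT := aux_measT τ hτ
    -- the sum function
    set s : unitInterval → ℝ := fun x => ∑ i : Fin d, f (τ i x) with hs
    have hsm : Measurable s := by
      apply Finset.measurable_sum
      intro i _
      exact hfm.comp (hτ i).measurable
    have hsl : ∀ x, c ≤ s x := by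
      intro x
      refine le_trans (hcf (τ ⟨0, hd⟩ x)) ?_
      exact Finset.single_le_sum (f := fun i => f (τ i x))
        (fun i _ => (hfpos _).le) (Finset.mem_univ (⟨0, hd⟩ : Fin d))
    have hsu : ∀ x, s x ≤ d * C := by
      intro x
      calc s x ≤ ∑ _i : Fin d, C := Finset.sum_le_sum fun i _ => hfC _
        _ = d * C := by simp [mul_comm]
    have hspos : ∀ x, 0 < s x := fun x => lt_of_lt_of_le hc (hsl x)
    -- bounds for logs
    have hMf : ∀ x, |Real.log (f x)| ≤ max |Real.log c| |Real.log C| := by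
      intro x
      rw [abs_le]
      constructor
      · refine le_trans (neg_le_neg (le_max_left |Real.log c| _)) ?_
        refine le_trans (neg_abs_le _) (Real.log_le_log hc (hcf x))
      · exact le_trans (Real.log_le_log (hfpos x) (hfC x))
          (le_trans (le_abs_self _) (le_max_right _ _))
    have hMs : ∀ x, |Real.log (s x)| ≤ max |Real.log c| |Real.log (d * C)| := by
      intro x
      rw [abs_le]
      constructor
      · refine le_trans (neg_le_neg (le_max_left |Real.log c| _)) ?_
        refine le_trans (neg_abs_le _) (Real.log_le_log hc (hsl x))
      · exact le_trans (Real.log_le_log (hspos x) (hsu x))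
          (le_trans (le_abs_self _) (le_max_right _ _))
    -- integrable pieces
    have hint1 : Integrable (fun p : unitInterval × (ℕ → Fin d) => Real.log (s p.1)) nuhat :=
      aux_integrable nuhat ((Real.measurable_log.comp hsm).comp measurable_fst) _
        (fun p => hMs p.1)
    have hint2 : Integrable (fun p : unitInterval × (ℕ → Fin d) => Real.log (f p.1)) nuhat :=
      aux_integrable nuhat ((Real.measurable_log.comp hfm).comp measurable_fst) _
        (fun p => hMf p.1)
    have hint3 : Integrable
        (fun p : unitInterval × (ℕ → Fin d) => Real.log (f (τ (p.2 0) p.1))) nuhat :=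
      aux_integrable nuhat ((Real.measurable_log.comp hfm).comp hT) _ (fun p => hMf _)
    -- rewrite the integrand as a difference
    have hre : (∫ p, Real.log ((∑ i : Fin d, f (τ i p.1)) / f p.1) ∂nuhat)
        = (∫ p, Real.log (s p.1) ∂nuhat) - ∫ p, Real.log (f p.1) ∂nuhat := by
      rw [← integral_sub hint1 hint2]
      apply integral_congr_ae
      apply Filter.Eventually.of_forall
      intro p
      exact Real.log_div (hspos p.1).ne' (hfpos p.1).ne'
    rw [hre]
    -- holonomic invariance for log f
    have hinv : (∫ p, Real.log (f (τ (p.2 0) p.1)) ∂nuhat)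
        = ∫ p, Real.log (f p.1) ∂nuhat := by
      have hmap := aux_map_eq τ nuhat hτ hhol
      have hgm : AEStronglyMeasurable (fun x => Real.log (f x))
          (nuhat.map (fun p : unitInterval × (ℕ → Fin d) => p.1)) :=
        (Real.measurable_log.comp hfm).aestronglyMeasurable
      calc (∫ p, Real.log (f (τ (p.2 0) p.1)) ∂nuhat)
          = ∫ x, Real.log (f x) ∂(nuhat.map (fun p => τ (p.2 0) p.1)) :=
            (integral_map hT.aemeasurable (hmap ▸ hgm)).symm
        _ = ∫ x, Real.log (f x) ∂(nuhat.map (fun p : unitInterval × (ℕ → Fin d) => p.1)) := by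
            rw [hmap]
        _ = ∫ p, Real.log (f p.1) ∂nuhat :=
            integral_map measurable_fst.aemeasurable hgm
    -- pointwise comparison
    have hmono : (∫ p, Real.log (f (τ (p.2 0) p.1)) ∂nuhat) ≤ ∫ p, Real.log (s p.1) ∂nuhat := by
      apply integral_mono hint3 hint1
      intro p
      apply Real.log_le_log (hfpos _)
      exact Finset.single_le_sum (f := fun i => f (τ i p.1))
        (fun i _ => (hfpos _).le) (Finset.mem_univ (p.2 0))
    linarith
  constructor
  · exact Real.sInf_nonneg key
  · -- the constant function 1 belongs
    have hmem : Real.log (d : ℝ) ∈ S := by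
      refine ⟨fun _ => 1, ⟨measurable_const, 1, 1, one_pos, fun _ => le_rfl, fun _ => le_rfl⟩, ?_⟩
      have : ∀ p : unitInterval × (ℕ → Fin d),
          Real.log ((∑ _i : Fin d, (1 : ℝ)) / 1) = Real.log (d : ℝ) := by
        intro p; simp
      simp only [Finset.sum_const, Finset.card_univ, Fintype.card_fin, nsmul_eq_mul, mul_one,
        div_one]
      simp [measure_univ]
    exact csInf_le ⟨0, key⟩ hmem
end
end

section
/- Let $\phi\in\mathbb{B}^+$ and suppose $\rho_1>0$ and $\rho_2>0$ are such that $([0,1],\tau_i,\phi)$ is both a $\rho_1$-weighted system and a $\rho_2$-weighted system. Then $\rho_1=\rho_2$; i.e. the transfer operator $P_\phi$ has a unique positive eigenvalue admitting a positive bounded eigenfunction together with a dual-eigenprobability. -/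
open MeasureTheory

noncomputable section

/-- The transfer (Ruelle) operator `P_φ f (x) = ∑ i, φ(τ_i x) f(τ_i x)`. -/
def transferOp {d : ℕ} (τ : Fin d → unitInterval → unitInterval)
    (φ : unitInterval → ℝ) (f : unitInterval → ℝ) : unitInterval → ℝ :=
  fun x => ∑ i : Fin d, φ (τ i x) * f (τ i x)

/-- `([0,1], τ_i, φ)` is a `ρ`-weighted system. -/
def IsRhoWeighted {d : ℕ} (τ : Fin d → unitInterval → unitInterval)
    (φ : unitInterval → ℝ) (ρ : ℝ) : Prop :=
  ∃ h : unitInterval → ℝ, MemBplus h ∧ (∀ x, transferOp τ φ h x = ρ * h x) ∧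
    ∃ ν : Measure unitInterval, IsProbabilityMeasure ν ∧
      ∀ f : C(unitInterval, ℝ),
        (∫ x, transferOp τ φ f x ∂ν) = ρ * ∫ x, f x ∂ν

lemma rho_le {d : ℕ} (τ : Fin d → unitInterval → unitInterval)
    (φ : unitInterval → ℝ) (hφ : MemBplus φ)
    (ρ₁ ρ₂ : ℝ) (hρ₁ : 0 < ρ₁) (hρ₂ : 0 < ρ₂)
    (hw₁ : IsRhoWeighted τ φ ρ₁) (hw₂ : IsRhoWeighted τ φ ρ₂) :
    ρ₁ ≤ ρ₂ := by
  obtain ⟨h₁, ⟨-, c₁, C₁, hc₁, hl₁, hu₁⟩, heig₁, -⟩ := hw₁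
  obtain ⟨h₂, ⟨-, c₂, C₂, hc₂, hl₂, hu₂⟩, heig₂, -⟩ := hw₂
  obtain ⟨cφ, Cφ, hcφ, hlφ, -⟩ := hφ.2
  set K : ℝ := C₁ / c₂ with hK
  have hKpos : 0 < K := div_pos (hc₁.trans_le ((hl₁ 0).trans (hu₁ 0))) hc₂
  -- key: ∀ n x, ρ₁^n * h₁ x ≤ K * (ρ₂^n * h₂ x)
  have key : ∀ n : ℕ, ∀ x, ρ₁ ^ n * h₁ x ≤ K * (ρ₂ ^ n * h₂ x) := by
    intro n
    induction n with
    | zero =>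
      intro x
      simp only [pow_zero, one_mul]
      calc h₁ x ≤ C₁ := hu₁ x
        _ = K * c₂ := by rw [hK, div_mul_cancel₀ C₁ hc₂.ne']
        _ ≤ K * h₂ x := by
            exact mul_le_mul_of_nonneg_left (hl₂ x) hKpos.le
    | succ n ih =>
      intro x
      have mono : transferOp τ φ (fun y => ρ₁ ^ n * h₁ y) x ≤
          transferOp τ φ (fun y => K * (ρ₂ ^ n * h₂ y)) x := by
        unfold transferOp
        refine Finset.sum_le_sum fun i _ => ?_
        have hφpos : 0 ≤ φ (τ i x) := (hcφ.le.trans (hlφ _))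
        exact mul_le_mul_of_nonneg_left (ih _) hφpos
      have e₁ : transferOp τ φ (fun y => ρ₁ ^ n * h₁ y) x
          = ρ₁ ^ (n + 1) * h₁ x := by
        unfold transferOp
        rw [show (∑ i : Fin d, φ (τ i x) * (ρ₁ ^ n * h₁ (τ i x)))
            = ρ₁ ^ n * ∑ i : Fin d, φ (τ i x) * h₁ (τ i x) by
          rw [Finset.mul_sum]; congr 1; ext i; ring]
        have := heig₁ x
        unfold transferOp at this
        rw [this]; ring
      have e₂ : transferOp τ φ (fun y => K * (ρ₂ ^ n * h₂ y)) x
          = K * (ρ₂ ^ (n + 1) * h₂ x) := by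
        unfold transferOp
        rw [show (∑ i : Fin d, φ (τ i x) * (K * (ρ₂ ^ n * h₂ (τ i x))))
            = K * ρ₂ ^ n * ∑ i : Fin d, φ (τ i x) * h₂ (τ i x) by
          rw [Finset.mul_sum]; congr 1; ext i; ring]
        have := heig₂ x
        unfold transferOp at this
        rw [this]; ring
      rw [← e₁, ← e₂]; exact mono
  -- conclude
  by_contra hlt
  push_neg at hlt
  have hr : 1 < ρ₁ / ρ₂ := (one_lt_div hρ₂).mpr hlt
  obtain ⟨n, hn⟩ := pow_unbounded_of_one_lt (K * C₂ / c₁) hr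
  have h1 := key n 0
  have h2 : ρ₁ ^ n * c₁ ≤ K * (ρ₂ ^ n * C₂) := by
    calc ρ₁ ^ n * c₁ ≤ ρ₁ ^ n * h₁ 0 :=
          mul_le_mul_of_nonneg_left (hl₁ 0) (pow_pos hρ₁ n).le
      _ ≤ K * (ρ₂ ^ n * h₂ 0) := h1
      _ ≤ K * (ρ₂ ^ n * C₂) := by
          exact mul_le_mul_of_nonneg_left
            (mul_le_mul_of_nonneg_left (hu₂ 0) (pow_pos hρ₂ n).le) hKpos.le
  have h3 : (ρ₁ / ρ₂) ^ n ≤ K * C₂ / c₁ := by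
    rw [div_pow, div_le_div_iff₀ (pow_pos hρ₂ n) hc₁]
    calc ρ₁ ^ n * c₁ ≤ K * (ρ₂ ^ n * C₂) := h2
      _ = K * C₂ * ρ₂ ^ n := by ring
  exact absurd h3 (not_le.mpr hn)

theorem stmt11 {d : ℕ} (hd : 1 ≤ d) (τ : Fin d → unitInterval → unitInterval)
    (hτ : ∀ i, Continuous (τ i))
    (φ : unitInterval → ℝ) (hφ : MemBplus φ)
    (ρ₁ ρ₂ : ℝ) (hρ₁ : 0 < ρ₁) (hρ₂ : 0 < ρ₂)
    (hw₁ : IsRhoWeighted τ φ ρ₁) (hw₂ : IsRhoWeighted τ φ ρ₂) :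
    ρ₁ = ρ₂ :=
  le_antisymm (rho_le τ φ hφ ρ₁ ρ₂ hρ₁ hρ₂ hw₁ hw₂)
    (rho_le τ φ hφ ρ₂ ρ₁ hρ₂ hρ₁ hw₂ hw₁)
end
end

section
/- Consider the IFS on $[0,1]$ with $d=2$ maps $\tau_0(x)=x$ and $\tau_1(x)=1-x$. Let $\bar{w}\in\Sigma=\{0,1\}^{\mathbb{N}}$ be any sequence different from the constant sequence $(1,1,1,\dots)$, and let $\hat{\nu}_0=\frac{1}{2}\big(\delta_{(0,\,11\bar{w})}+\delta_{(1,\,1\bar{w})}\big)$. Then $h(\hat{\nu}_0)=\ln 2$; in particular $\hat{\nu}_0$ attains the supremum $\sup\{h(\hat{\nu}):\hat{\nu}\text{ holonomic}\}=\ln 2$. -/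
open MeasureTheory

noncomputable section

/-- Prepend a symbol to a sequence. -/
def prepend (a : Fin 2) (w : ℕ → Fin 2) : ℕ → Fin 2 :=
  fun n => Nat.casesOn n a w

/-- The IFS `τ₀(x) = x`, `τ₁(x) = 1 - x` on `[0,1]`. -/
def tauEx : Fin 2 → unitInterval → unitInterval :=
  ![fun x => x, unitInterval.symm]

/-- The holonomic probability `ν̂₀ = (δ_{(0,11w̄)} + δ_{(1,1w̄)})/2`. -/
def nuhatEx (wbar : ℕ → Fin 2) : Measure (unitInterval × (ℕ → Fin 2)) :=
  (2 : ENNReal)⁻¹ •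
    (Measure.dirac ((0 : unitInterval), prepend 1 (prepend 1 wbar))
      + Measure.dirac ((1 : unitInterval), prepend 1 wbar))


lemma integral_nuhatEx (wbar : ℕ → Fin 2) (g : unitInterval × (ℕ → Fin 2) → ℝ) :
    ∫ p, g p ∂(nuhatEx wbar)
      = (g ((0 : unitInterval), prepend 1 (prepend 1 wbar))
        + g ((1 : unitInterval), prepend 1 wbar)) / 2 := by
  rw [nuhatEx, integral_smul_measure,
    integral_add_measure ((integrable_const _).congr (ae_eq_dirac g).symm)
      ((integrable_const _).congr (ae_eq_dirac g).symm),
    integral_dirac, integral_dirac]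
  simp [ENNReal.toReal_inv]
  ring

lemma nuhatEx_prob (wbar : ℕ → Fin 2) : IsProbabilityMeasure (nuhatEx wbar) := by
  constructor
  simp [nuhatEx]
  rw [← two_mul, ENNReal.mul_inv_cancel two_ne_zero ENNReal.ofNat_ne_top]

lemma tauEx_zero (x : unitInterval) : tauEx 0 x = x := rfl
lemma tauEx_one (x : unitInterval) : tauEx 1 x = unitInterval.symm x := rfl

lemma logineq (a b : ℝ) (ha : 0 < a) (hb : 0 < b) :
    Real.log 2 ≤ (Real.log ((a + b) / a) + Real.log ((a + b) / b)) / 2 := by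
  have h1 : (4 : ℝ) ≤ ((a + b) / a) * ((a + b) / b) := by
    rw [div_mul_div_comm, le_div_iff₀ (by positivity)]
    nlinarith [sq_nonneg (a - b)]
  have h2 : Real.log ((a + b) / a) + Real.log ((a + b) / b)
      = Real.log (((a + b) / a) * ((a + b) / b)) :=
    (Real.log_mul (by positivity) (by positivity)).symm
  have h3 : Real.log 4 ≤ Real.log (((a + b) / a) * ((a + b) / b)) :=
    Real.log_le_log (by norm_num) h1
  have h4 : Real.log 4 = 2 * Real.log 2 := by
    rw [show (4 : ℝ) = 2 ^ 2 by norm_num, Real.log_pow]; push_cast; ring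
  linarith

theorem stmt15 (wbar : ℕ → Fin 2) (hwbar : wbar ≠ fun _ => 1) :
    entropy tauEx (nuhatEx wbar) = Real.log 2 ∧
    sSup {r : ℝ | ∃ nuhat : Measure (unitInterval × (ℕ → Fin 2)),
        IsProbabilityMeasure nuhat ∧ IsHolonomic tauEx nuhat ∧
        r = entropy tauEx nuhat}
      = Real.log 2 := by
  have hval : ∀ f : unitInterval → ℝ,
      (∫ p, Real.log ((∑ i : Fin 2, f (tauEx i p.1)) / f p.1) ∂(nuhatEx wbar))
        = (Real.log ((f 0 + f 1) / f 0) + Real.log ((f 1 + f 0) / f 1)) / 2 := by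
    intro f
    rw [integral_nuhatEx]
    simp [Fin.sum_univ_two, tauEx_zero, tauEx_one, unitInterval.symm_zero,
      unitInterval.symm_one]
  have hmem : Real.log 2 ∈ {r : ℝ | ∃ f : unitInterval → ℝ, MemBplus f ∧
      r = ∫ p, Real.log ((∑ i : Fin 2, f (tauEx i p.1)) / f p.1) ∂(nuhatEx wbar)} := by
    refine ⟨fun _ => 1, ⟨measurable_const, 1, 1, one_pos, fun _ => le_refl _,
      fun _ => le_refl _⟩, ?_⟩
    rw [hval fun _ => 1]
    norm_num
  have hlb : ∀ r ∈ {r : ℝ | ∃ f : unitInterval → ℝ, MemBplus f ∧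
      r = ∫ p, Real.log ((∑ i : Fin 2, f (tauEx i p.1)) / f p.1) ∂(nuhatEx wbar)},
      Real.log 2 ≤ r := by
    rintro r ⟨f, ⟨hf, c, C, hc, hcf, hfC⟩, rfl⟩
    rw [hval, add_comm (f 1) (f 0)]
    exact logineq (f 0) (f 1) (lt_of_lt_of_le hc (hcf 0)) (lt_of_lt_of_le hc (hcf 1))
  have h1 : entropy tauEx (nuhatEx wbar) = Real.log 2 := by
    unfold entropy
    exact le_antisymm (csInf_le ⟨Real.log 2, hlb⟩ hmem) (le_csInf ⟨_, hmem⟩ hlb)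
  refine ⟨h1, ?_⟩
  have hhol : IsHolonomic tauEx (nuhatEx wbar) := by
    intro f
    rw [integral_nuhatEx, integral_nuhatEx]
    simp only [show prepend 1 (prepend 1 wbar) 0 = 1 from rfl,
      show prepend 1 wbar 0 = 1 from rfl, tauEx_one, unitInterval.symm_zero,
      unitInterval.symm_one]
    ring
  have hub : ∀ r ∈ {r : ℝ | ∃ nuhat : Measure (unitInterval × (ℕ → Fin 2)),
      IsProbabilityMeasure nuhat ∧ IsHolonomic tauEx nuhat ∧
      r = entropy tauEx nuhat}, r ≤ Real.log 2 := by
    rintro r ⟨ν, hp, hh, rfl⟩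
    haveI := hp
    have hmem' : Real.log 2 ∈ {r : ℝ | ∃ f : unitInterval → ℝ, MemBplus f ∧
        r = ∫ p, Real.log ((∑ i : Fin 2, f (tauEx i p.1)) / f p.1) ∂ν} := by
      refine ⟨fun _ => 1, ⟨measurable_const, 1, 1, one_pos, fun _ => le_refl _,
        fun _ => le_refl _⟩, ?_⟩
      norm_num [Fin.sum_univ_two, integral_const]
    unfold entropy
    by_cases hbd : BddBelow {r : ℝ | ∃ f : unitInterval → ℝ, MemBplus f ∧
        r = ∫ p, Real.log ((∑ i : Fin 2, f (tauEx i p.1)) / f p.1) ∂ν}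
    · exact csInf_le hbd hmem'
    · rw [Real.sInf_of_not_bddBelow hbd]
      exact Real.log_nonneg one_le_two
  have hmemT : Real.log 2 ∈ {r : ℝ | ∃ nuhat : Measure (unitInterval × (ℕ → Fin 2)),
      IsProbabilityMeasure nuhat ∧ IsHolonomic tauEx nuhat ∧
      r = entropy tauEx nuhat} := ⟨nuhatEx wbar, nuhatEx_prob wbar, hhol, h1.symm⟩
  exact le_antisymm (csSup_le ⟨_, hmemT⟩ hub) (le_csSup ⟨Real.log 2, hub⟩ hmemT)
end
end

section
/- Let $\phi\in\mathbb{B}^+$, $\rho>0$ and $h\in\mathbb{B}^+$ satisfy $P_\phi h=\rho h$ pointwise, and define the normalized weights $v_i(x)=\phi(\tau_i(x))h(\tau_i(x))/(\rho h(x))$ for $i=0,\dots,d-1$ (so that $\sum_{i=0}^{d-1}v_i=1$). Let $\nu$ be a Borel probability measure on $[0,1]$ such that $\int\sum_{i=0}^{d-1}v_i(x)f(\tau_i(x))\,d\nu(x)=\int f\,d\nu$ for every bounded Borel $f:[0,1]\to\mathbb{R}$. Then $-\int\sum_{i=0}^{d-1}v_i\ln v_i\,d\nu+\int\ln\phi\,d\nu=\ln\rho$.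 -/
open MeasureTheory

noncomputable section

lemma abslog_le {c C t : ℝ} (hc : 0 < c) (h1 : c ≤ t) (h2 : t ≤ C) :
    |Real.log t| ≤ |Real.log c| + |Real.log C| := by
  have ht : 0 < t := lt_of_lt_of_le hc h1
  have l1 : Real.log c ≤ Real.log t := Real.log_le_log hc h1
  have l2 : Real.log t ≤ Real.log C := Real.log_le_log ht h2
  have := neg_abs_le (Real.log c)
  have := le_abs_self (Real.log C)
  have := abs_nonneg (Real.log c)
  have := abs_nonneg (Real.log C)
  rw [abs_le]; constructor <;> linarith

theorem stmt18 {d : ℕ} (hd : 1 ≤ d) (τ : Fin d → unitInterval → unitInterval)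
    (hτ : ∀ i, Continuous (τ i))
    (φ : unitInterval → ℝ) (hφ : MemBplus φ)
    (ρ : ℝ) (hρ : 0 < ρ) (h : unitInterval → ℝ) (hh : MemBplus h)
    (heig : ∀ x, (∑ i : Fin d, φ (τ i x) * h (τ i x)) = ρ * h x)
    (v : Fin d → unitInterval → ℝ)
    (hv : ∀ i x, v i x = φ (τ i x) * h (τ i x) / (ρ * h x))
    (ν : Measure unitInterval) [IsProbabilityMeasure ν]
    (hinv : ∀ f : unitInterval → ℝ, Measurable f → (∃ C : ℝ, ∀ x, |f x| ≤ C) →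
      (∫ x, ∑ i : Fin d, v i x * f (τ i x) ∂ν) = ∫ x, f x ∂ν) :
    (-(∫ x, ∑ i : Fin d, v i x * Real.log (v i x) ∂ν))
      + (∫ x, Real.log (φ x) ∂ν) = Real.log ρ := by
  obtain ⟨hφm, cφ, Cφ, hcφ, hφc, hφC⟩ := hφ
  obtain ⟨hhm, ch, Ch, hch, hhc, hhC⟩ := hh
  have hhx : ∀ x, 0 < h x := fun x => lt_of_lt_of_le hch (hhc x)
  have hφx : ∀ x, 0 < φ x := fun x => lt_of_lt_of_le hcφ (hφc x)
  have hρh : ∀ x, 0 < ρ * h x := fun x => mul_pos hρ (hhx x)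
  have hvpos : ∀ i x, 0 < v i x := by
    intro i x; rw [hv]; exact div_pos (mul_pos (hφx _) (hhx _)) (hρh x)
  have hvsum : ∀ x, ∑ i, v i x = 1 := by
    intro x
    simp only [hv]
    rw [← Finset.sum_div, heig x, div_self (hρh x).ne']
  have hvle : ∀ i x, v i x ≤ 1 := by
    intro i x
    rw [← hvsum x]
    exact Finset.single_le_sum (f := fun j => v j x) (fun j _ => (hvpos j x).le)
      (Finset.mem_univ i)
  have hlogv : ∀ i x, Real.log (v i x) =
      Real.log (φ (τ i x)) + Real.log (h (τ i x)) - Real.log ρ - Real.log (h x) := by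
    intro i x
    rw [hv, Real.log_div (mul_pos (hφx _) (hhx _)).ne' (hρh x).ne',
        Real.log_mul (hφx _).ne' (hhx _).ne', Real.log_mul hρ.ne' (hhx x).ne']
    ring
  have hτm : ∀ i, Measurable (τ i) := fun i => (hτ i).measurable
  have hvm : ∀ i, Measurable (v i) := by
    intro i
    have hvf : v i = fun x => φ (τ i x) * h (τ i x) / (ρ * h x) := funext (hv i)
    rw [hvf]
    exact ((hφm.comp (hτm i)).mul (hhm.comp (hτm i))).div (measurable_const.mul hhm)
  have hintg : ∀ (f : unitInterval → ℝ) (C : ℝ), Measurable f → (∀ x, |f x| ≤ C) →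
      Integrable f ν := by
    intro f C hm hC
    exact (integrable_const C).mono' hm.aestronglyMeasurable
      (ae_of_all _ (by simpa using hC))
  set F := fun x => Real.log (φ x) with hF
  set G := fun x => Real.log (h x) with hG
  set Kφ := |Real.log cφ| + |Real.log Cφ| with hKφ
  set Kh := |Real.log ch| + |Real.log Ch| with hKh
  have hFm : Measurable F := hφm.log
  have hGm : Measurable G := hhm.log
  have hFb : ∀ x, |F x| ≤ Kφ := fun x => abslog_le hcφ (hφc x) (hφC x)
  have hGb : ∀ x, |G x| ≤ Kh := fun x => abslog_le hch (hhc x) (hhC x)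
  have hA := hinv F hFm ⟨Kφ, hFb⟩
  have hB := hinv G hGm ⟨Kh, hGb⟩
  -- pointwise identity
  have hpt : ∀ x, (∑ i, v i x * Real.log (v i x)) =
      (∑ i, v i x * F (τ i x)) + (∑ i, v i x * G (τ i x)) - Real.log ρ - G x := by
    intro x
    calc ∑ i, v i x * Real.log (v i x)
        = ∑ i, (v i x * F (τ i x) + v i x * G (τ i x)
            - v i x * Real.log ρ - v i x * G x) :=
          Finset.sum_congr rfl (fun i _ => by rw [hlogv]; ring)
      _ = (∑ i, v i x * F (τ i x)) + (∑ i, v i x * G (τ i x))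
            - (∑ i, v i x) * Real.log ρ - (∑ i, v i x) * G x := by
          simp [Finset.sum_sub_distrib, Finset.sum_add_distrib, Finset.sum_mul]
      _ = _ := by rw [hvsum x]; ring
  -- integrability of pieces
  have hsummeas : ∀ (g : unitInterval → ℝ), Measurable g →
      Measurable (fun x => ∑ i, v i x * g (τ i x)) := by
    intro g hg
    exact Finset.measurable_sum _ (fun i _ => (hvm i).mul (hg.comp (hτm i)))
  have hsumbd : ∀ (g : unitInterval → ℝ) (K : ℝ), (∀ x, |g x| ≤ K) →
      ∀ x, |∑ i, v i x * g (τ i x)| ≤ d * K := by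
    intro g K hK x
    calc |∑ i, v i x * g (τ i x)| ≤ ∑ i, |v i x * g (τ i x)| :=
          Finset.abs_sum_le_sum_abs _ _
      _ ≤ ∑ _i : Fin d, K := by
          refine Finset.sum_le_sum (fun i _ => ?_)
          rw [abs_mul]
          calc |v i x| * |g (τ i x)| ≤ 1 * K := by
                apply mul_le_mul _ (hK _) (abs_nonneg _) zero_le_one
                rw [abs_of_pos (hvpos i x)]; exact hvle i x
            _ = K := one_mul K
      _ = d * K := by simp [Finset.sum_const]
  have I1 : Integrable (fun x => ∑ i, v i x * F (τ i x)) ν :=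
    hintg _ (d * Kφ) (hsummeas F hFm) (hsumbd F Kφ hFb)
  have I2 : Integrable (fun x => ∑ i, v i x * G (τ i x)) ν :=
    hintg _ (d * Kh) (hsummeas G hGm) (hsumbd G Kh hGb)
  have I3 : Integrable (fun _ : unitInterval => Real.log ρ) ν := integrable_const _
  have I4 : Integrable G ν := hintg _ Kh hGm hGb
  have e1 : (∫ x, ∑ i, v i x * Real.log (v i x) ∂ν)
      = (∫ x, ((∑ i, v i x * F (τ i x)) + (∑ i, v i x * G (τ i x))
          - Real.log ρ - G x) ∂ν) := integral_congr_ae (ae_of_all _ hpt)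
  have s1 : (∫ x, ((∑ i, v i x * F (τ i x)) + (∑ i, v i x * G (τ i x))
        - Real.log ρ - G x) ∂ν)
      = (∫ x, ((∑ i, v i x * F (τ i x)) + (∑ i, v i x * G (τ i x)) - Real.log ρ) ∂ν)
        - ∫ x, G x ∂ν := integral_sub ((I1.add I2).sub I3) I4
  have s2 : (∫ x, ((∑ i, v i x * F (τ i x)) + (∑ i, v i x * G (τ i x)) - Real.log ρ) ∂ν)
      = (∫ x, ((∑ i, v i x * F (τ i x)) + (∑ i, v i x * G (τ i x))) ∂ν)
        - ∫ _x, Real.log ρ ∂ν := integral_sub (I1.add I2) I3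
  have s3 : (∫ x, ((∑ i, v i x * F (τ i x)) + (∑ i, v i x * G (τ i x))) ∂ν)
      = (∫ x, ∑ i, v i x * F (τ i x) ∂ν) + ∫ x, ∑ i, v i x * G (τ i x) ∂ν :=
    integral_add I1 I2
  rw [e1, s1, s2, s3, hA, hB, integral_const]
  simp only [measure_univ, probReal_univ, ENNReal.toReal_one, smul_eq_mul, one_mul]
  ring
end
end

section
/- Let $\phi\in\mathbb{B}^+$, $\rho>0$ and $h\in\mathbb{B}^+$ satisfy $P_\phi h=\rho h$ pointwise, and define the normalized weights $u_i(x)=\phi(\tau_i(x))h(\tau_i(x))/(\rho h(x))$ for $i=0,\dots,d-1$. Let $\nu$ be a Borel probability measure on $[0,1]$ and let $v_0,\dots,v_{d-1}:[0,1]\to(0,1]$ be Borel measurable with $\sum_{i=0}^{d-1}v_i=1$ such that $\int\sum_{i=0}^{d-1}v_i(x)f(\tau_i(x))\,d\nu(x)=\int f\,d\nu$ for every bounded Borel $f:[0,1]\to\mathbb{R}$. If the equality $-\int\sum_{i=0}^{d-1}v_i\ln v_i\,d\nu+\int\ln\phi\,d\nu=\ln\rho$ holds, then $v_i=u_i$ $\nu$-almost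 everywhere for each $i$, and consequently $\nu$ is invariant for the normalized operator: $\int\sum_{i=0}^{d-1}u_i(x)f(\tau_i(x))\,d\nu(x)=\int f\,d\nu$ for every bounded Borel $f:[0,1]\to\mathbb{R}$. -/
open MeasureTheory

noncomputable section

lemma aux_mul_log_le {a b : ℝ} (ha : 0 < a) (hb : 0 < b) :
    b * (Real.log a - Real.log b) ≤ a - b := by
  have h1 : Real.log (a / b) ≤ a / b - 1 := Real.log_le_sub_one_of_pos (div_pos ha hb)
  rw [Real.log_div ha.ne' hb.ne'] at h1
  have h2 := mul_le_mul_of_nonneg_left h1 hb.le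
  have h3 : b * (a / b - 1) = a - b := by field_simp
  linarith

lemma aux_mul_log_lt {a b : ℝ} (ha : 0 < a) (hb : 0 < b) (hne : a ≠ b) :
    b * (Real.log a - Real.log b) < a - b := by
  have hab : a / b ≠ 1 := by
    simp only [ne_eq, div_eq_one_iff_eq hb.ne']; exact hne
  have h1 : Real.log (a / b) < a / b - 1 :=
    Real.log_lt_sub_one_of_pos (div_pos ha hb) hab
  rw [Real.log_div ha.ne' hb.ne'] at h1
  have h2 := mul_lt_mul_of_pos_left h1 hb
  have h3 : b * (a / b - 1) = a - b := by field_simp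
  linarith

lemma aux_abs_mul_log_le {t : ℝ} (h0 : 0 < t) (h1 : t ≤ 1) : |t * Real.log t| ≤ 1 := by
  have hlog : Real.log t ≤ 0 := Real.log_nonpos h0.le h1
  have hinv : Real.log t⁻¹ ≤ t⁻¹ - 1 := Real.log_le_sub_one_of_pos (inv_pos.2 h0)
  rw [Real.log_inv] at hinv
  have h2 : -(t * Real.log t) ≤ 1 - t := by
    have := mul_le_mul_of_nonneg_left hinv h0.le
    have h3 : t * (t⁻¹ - 1) = 1 - t := by field_simp
    nlinarith
  have h4 : t * Real.log t ≤ 0 := mul_nonpos_of_nonneg_of_nonpos h0.le hlog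
  rw [abs_of_nonpos h4]
  linarith

theorem stmt19 {d : ℕ} (hd : 1 ≤ d) (τ : Fin d → unitInterval → unitInterval)
    (hτ : ∀ i, Continuous (τ i))
    (φ : unitInterval → ℝ) (hφ : MemBplus φ)
    (ρ : ℝ) (hρ : 0 < ρ) (h : unitInterval → ℝ) (hh : MemBplus h)
    (heig : ∀ x, (∑ i : Fin d, φ (τ i x) * h (τ i x)) = ρ * h x)
    (u : Fin d → unitInterval → ℝ)
    (hu : ∀ i x, u i x = φ (τ i x) * h (τ i x) / (ρ * h x))
    (ν : Measure unitInterval) [IsProbabilityMeasure ν]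
    (v : Fin d → unitInterval → ℝ) (hvmeas : ∀ i, Measurable (v i))
    (hvpos : ∀ i x, 0 < v i x) (hvle : ∀ i x, v i x ≤ 1)
    (hvsum : ∀ x, ∑ i : Fin d, v i x = 1)
    (hinv : ∀ f : unitInterval → ℝ, Measurable f → (∃ C : ℝ, ∀ x, |f x| ≤ C) →
      (∫ x, ∑ i : Fin d, v i x * f (τ i x) ∂ν) = ∫ x, f x ∂ν)
    (heq : (-(∫ x, ∑ i : Fin d, v i x * Real.log (v i x) ∂ν))
      + (∫ x, Real.log (φ x) ∂ν) = Real.log ρ) :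
    (∀ i : Fin d, ∀ᵐ x ∂ν, v i x = u i x) ∧
    (∀ f : unitInterval → ℝ, Measurable f → (∃ C : ℝ, ∀ x, |f x| ≤ C) →
      (∫ x, ∑ i : Fin d, u i x * f (τ i x) ∂ν) = ∫ x, f x ∂ν) := by
  obtain ⟨hφm, cφ, Cφ, hcφ, hφlb, hφub⟩ := hφ
  obtain ⟨hhm, ch, Ch, hch, hhlb, hhub⟩ := hh
  have hφpos : ∀ x, 0 < φ x := fun x => hcφ.trans_le (hφlb x)
  have hhpos : ∀ x, 0 < h x := fun x => hch.trans_le (hhlb x)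
  have hCh : 0 < Ch := (hhpos 0).trans_le (hhub 0)
  have hCφ : 0 < Cφ := (hφpos 0).trans_le (hφub 0)
  have hρh : ∀ x, 0 < ρ * h x := fun x => mul_pos hρ (hhpos x)
  -- basic facts about u
  have hupos : ∀ i x, 0 < u i x := by
    intro i x
    rw [hu]
    exact div_pos (mul_pos (hφpos _) (hhpos _)) (hρh x)
  have husum : ∀ x, ∑ i : Fin d, u i x = 1 := by
    intro x
    have : ∑ i : Fin d, u i x = (∑ i : Fin d, φ (τ i x) * h (τ i x)) / (ρ * h x) := by
      rw [Finset.sum_div]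
      exact Finset.sum_congr rfl fun i _ => hu i x
    rw [this, heig, div_self (hρh x).ne']
  have hule : ∀ i x, u i x ≤ 1 := by
    intro i x
    calc u i x ≤ ∑ j : Fin d, u j x :=
          Finset.single_le_sum (fun j _ => (hupos j x).le) (Finset.mem_univ i)
      _ = 1 := husum x
  set clow : ℝ := cφ * ch / (ρ * Ch) with hclow_def
  have hclow : 0 < clow := div_pos (mul_pos hcφ hch) (mul_pos hρ hCh)
  have hulb : ∀ i x, clow ≤ u i x := by
    intro i x
    rw [hu]
    show cφ * ch / (ρ * Ch) ≤ _
    exact div_le_div₀ (mul_pos (hφpos _) (hhpos _)).le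
      (mul_le_mul (hφlb _) (hhlb _) hch.le (hφpos _).le) (hρh x)
      (mul_le_mul_of_nonneg_left (hhub x) hρ.le)
  have humeas : ∀ i, Measurable (u i) := by
    intro i
    have : u i = fun x => φ (τ i x) * h (τ i x) / (ρ * h x) := funext fun x => hu i x
    rw [this]
    exact ((hφm.comp (hτ i).measurable).mul (hhm.comp (hτ i).measurable)).div
      (measurable_const.mul hhm)
  -- integrability from boundedness
  have intb : ∀ f : unitInterval → ℝ, Measurable f → (∃ C : ℝ, ∀ x, |f x| ≤ C) →
      Integrable f ν := by
    rintro f hf ⟨C, hC⟩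
    exact (integrable_const C).mono' hf.aestronglyMeasurable
      (Filter.Eventually.of_forall fun x => by simpa [Real.norm_eq_abs] using hC x)
  -- the functions in play
  set F : unitInterval → ℝ := fun x => Real.log (φ x * h x) with hF_def
  set H : unitInterval → ℝ := fun x => Real.log (h x) with hH_def
  set g : unitInterval → ℝ :=
    fun x => ∑ i : Fin d, v i x * (Real.log (u i x) - Real.log (v i x)) with hg_def
  -- bounds
  have hFb : ∀ x, |F x| ≤ max |Real.log (cφ * ch)| |Real.log (Cφ * Ch)| := by
    intro x
    exact abs_le_max_abs_abs
      (Real.log_le_log (mul_pos hcφ hch) (mul_le_mul (hφlb x) (hhlb x) hch.le (hφpos x).le))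
      (Real.log_le_log (mul_pos (hφpos x) (hhpos x))
        (mul_le_mul (hφub x) (hhub x) (hhpos x).le hCφ.le))
  have hFm : Measurable F := (hφm.mul hhm).log
  have hHb : ∀ x, |H x| ≤ max |Real.log ch| |Real.log Ch| := fun x =>
    abs_le_max_abs_abs (Real.log_le_log hch (hhlb x)) (Real.log_le_log (hhpos x) (hhub x))
  have hHm : Measurable H := hhm.log
  have hΦb : ∀ x, |Real.log (φ x)| ≤ max |Real.log cφ| |Real.log Cφ| := fun x =>
    abs_le_max_abs_abs (Real.log_le_log hcφ (hφlb x)) (Real.log_le_log (hφpos x) (hφub x))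
  have hlogu_b : ∀ i x, |Real.log (u i x)| ≤ |Real.log clow| := by
    intro i x
    have h1 : Real.log clow ≤ Real.log (u i x) := Real.log_le_log hclow (hulb i x)
    have h2 : Real.log (u i x) ≤ 0 := Real.log_nonpos (hupos i x).le (hule i x)
    have := abs_le_max_abs_abs h1 h2
    simpa using this
  -- pointwise identity for g
  have hlogu : ∀ i x, Real.log (u i x) = F (τ i x) - (Real.log ρ + H x) := by
    intro i x
    rw [hu, Real.log_div (mul_pos (hφpos _) (hhpos _)).ne' (hρh x).ne',
      Real.log_mul hρ.ne' (hhpos x).ne']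
  have hgx : ∀ x, g x = (∑ i : Fin d, v i x * F (τ i x)) - (Real.log ρ + H x)
      - (∑ i : Fin d, v i x * Real.log (v i x)) := by
    intro x
    simp only [hg_def, hlogu]
    have : ∀ i : Fin d, v i x * (F (τ i x) - (Real.log ρ + H x) - Real.log (v i x))
        = v i x * F (τ i x) - v i x * (Real.log ρ + H x) - v i x * Real.log (v i x) := by
      intro i; ring
    rw [Finset.sum_congr rfl fun i _ => this i, Finset.sum_sub_distrib,
      Finset.sum_sub_distrib, ← Finset.sum_mul, hvsum, one_mul]
  -- integrabilities
  have int_vF : Integrable (fun x => ∑ i : Fin d, v i x * F (τ i x)) ν := by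
    apply intb _ (Finset.measurable_sum _ fun i _ => (hvmeas i).mul (hFm.comp (hτ i).measurable))
    refine ⟨d * max |Real.log (cφ * ch)| |Real.log (Cφ * Ch)|, fun x => ?_⟩
    calc |∑ i : Fin d, v i x * F (τ i x)| ≤ ∑ i : Fin d, |v i x * F (τ i x)| :=
          Finset.abs_sum_le_sum_abs _ _
      _ ≤ ∑ _i : Fin d, max |Real.log (cφ * ch)| |Real.log (Cφ * Ch)| := by
          apply Finset.sum_le_sum
          intro i _
          rw [abs_mul]
          calc |v i x| * |F (τ i x)| ≤ 1 * max |Real.log (cφ * ch)| |Real.log (Cφ * Ch)| := by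
                apply mul_le_mul (abs_le.2 ⟨by linarith [hvpos i x], hvle i x⟩)
                  (hFb _) (abs_nonneg _) zero_le_one
            _ = _ := one_mul _
      _ = d * max |Real.log (cφ * ch)| |Real.log (Cφ * Ch)| := by
          rw [Finset.sum_const, Finset.card_univ, Fintype.card_fin, nsmul_eq_mul]
  have int_cH : Integrable (fun x => Real.log ρ + H x) ν := by
    apply intb _ (measurable_const.add hHm)
    exact ⟨|Real.log ρ| + max |Real.log ch| |Real.log Ch|, fun x =>
      (abs_add_le _ _).trans (by linarith [hHb x])⟩
  have int_vlogv : Integrable (fun x => ∑ i : Fin d, v i x * Real.log (v i x)) ν := by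
    apply intb _ (Finset.measurable_sum _ fun i _ => (hvmeas i).mul (hvmeas i).log)
    refine ⟨d * 1, fun x => ?_⟩
    calc |∑ i : Fin d, v i x * Real.log (v i x)| ≤ ∑ i : Fin d, |v i x * Real.log (v i x)| :=
          Finset.abs_sum_le_sum_abs _ _
      _ ≤ ∑ _i : Fin d, (1 : ℝ) := Finset.sum_le_sum fun i _ =>
          aux_abs_mul_log_le (hvpos i x) (hvle i x)
      _ = d * 1 := by rw [Finset.sum_const, Finset.card_univ, Fintype.card_fin, nsmul_eq_mul]
  have intg : Integrable g ν := by
    have : g = fun x => (∑ i : Fin d, v i x * F (τ i x)) - (Real.log ρ + H x)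
        - (∑ i : Fin d, v i x * Real.log (v i x)) := funext hgx
    rw [this]
    exact (int_vF.sub int_cH).sub int_vlogv
  have int_H : Integrable H ν := intb _ hHm ⟨_, hHb⟩
  have int_Φ : Integrable (fun x => Real.log (φ x)) ν := intb _ hφm.log ⟨_, hΦb⟩
  -- integral of g is zero
  have hintF : (∫ x, F x ∂ν) = (∫ x, Real.log (φ x) ∂ν) + ∫ x, H x ∂ν := by
    have : F = fun x => Real.log (φ x) + H x := by
      funext x
      exact Real.log_mul (hφpos x).ne' (hhpos x).ne'
    rw [this, integral_add int_Φ int_H]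
  have hintg : (∫ x, g x ∂ν) = 0 := by
    have h1 : (∫ x, g x ∂ν) = (∫ x, ∑ i : Fin d, v i x * F (τ i x) ∂ν)
        - (∫ x, (Real.log ρ + H x) ∂ν) - ∫ x, ∑ i : Fin d, v i x * Real.log (v i x) ∂ν := by
      have int_AB : Integrable (fun x => (∑ i : Fin d, v i x * F (τ i x))
          - (Real.log ρ + H x)) ν := int_vF.sub int_cH
      rw [show (fun x => g x) = fun x => (∑ i : Fin d, v i x * F (τ i x))
          - (Real.log ρ + H x) - (∑ i : Fin d, v i x * Real.log (v i x)) from funext hgx,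
        integral_sub int_AB int_vlogv, integral_sub int_vF int_cH]
    rw [h1, hinv F hFm ⟨_, hFb⟩, hintF, integral_add (integrable_const _) int_H,
      integral_const, probReal_univ]
    simp only [ENNReal.toReal_one, smul_eq_mul, one_mul]
    linarith [heq]
  -- g ≤ 0 pointwise
  have hgle : ∀ x, g x ≤ 0 := by
    intro x
    calc g x ≤ ∑ i : Fin d, (u i x - v i x) :=
          Finset.sum_le_sum fun i _ => aux_mul_log_le (hupos i x) (hvpos i x)
      _ = 0 := by rw [Finset.sum_sub_distrib, husum, hvsum, sub_self]
  -- hence g = 0 a.e.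
  have hg0 : ∀ᵐ x ∂ν, g x = 0 := by
    have hneg : (∫ x, (fun y => -g y) x ∂ν) = 0 := by
      rw [integral_neg, hintg, neg_zero]
    have := (integral_eq_zero_iff_of_nonneg (fun x => neg_nonneg.2 (hgle x)) intg.neg).mp hneg
    filter_upwards [this] with x hx
    simpa [neg_eq_zero] using hx
  -- first conclusion
  have hvu : ∀ i : Fin d, ∀ᵐ x ∂ν, v i x = u i x := by
    intro i
    filter_upwards [hg0] with x hx
    by_contra hne
    have hterms : ∀ j ∈ Finset.univ, v j x * (Real.log (u j x) - Real.log (v j x))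
        ≤ u j x - v j x := fun j _ => aux_mul_log_le (hupos j x) (hvpos j x)
    have hsum_eq : (∑ j : Fin d, v j x * (Real.log (u j x) - Real.log (v j x)))
        = ∑ j : Fin d, (u j x - v j x) := by
      rw [show (∑ j : Fin d, v j x * (Real.log (u j x) - Real.log (v j x))) = g x from rfl, hx,
        Finset.sum_sub_distrib, husum, hvsum, sub_self]
    have heqi := (Finset.sum_eq_sum_iff_of_le hterms).mp hsum_eq i (Finset.mem_univ i)
    exact (aux_mul_log_lt (hupos i x) (hvpos i x) (fun hvv => hne hvv.symm)).ne heqi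
  refine ⟨hvu, ?_⟩
  intro f hf hbf
  have hall : ∀ᵐ x ∂ν, ∀ i : Fin d, v i x = u i x := ae_all_iff.mpr hvu
  have hae : (fun x => ∑ i : Fin d, u i x * f (τ i x))
      =ᵐ[ν] fun x => ∑ i : Fin d, v i x * f (τ i x) := by
    filter_upwards [hall] with x hx
    exact Finset.sum_congr rfl fun i _ => by rw [hx i]
  rw [integral_congr_ae hae, hinv f hf hbf]
end
end
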